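/- arXiv:2002.09342 — 10 statements merged into one kernel-verified Lean document; each statement's English description precedes it below -/
import Mathlib

section
/- Let X be a compact totally separated space with a Γ-action by homeomorphisms. If the action of Γ on the Boolean algebra of clopen subsets of X has all orbits finite (i.e., X is an odometer), then every continuous Γ-equivariant map from X to a subshift over a finite alphabet has finite image. -/
/-- if `X` is a compact totally separated `Γ`-space which is an odometer
(all orbits on clopen sets are finite), then every continuous equivariant map from `X`
to a subshift over a finite alphabet has finite image. -/
theorem statement1 {Γ X A : Type*} [Group Γ] [TopologicalSpace X] [CompactSpace X]
    [TotallySeparatedSpace X] [MulAction Γ X]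
    (hcont : ∀ g : Γ, Continuous fun x : X => g • x)
    [Fintype A] [TopologicalSpace A] [DiscreteTopology A]
    (hodo : ∀ U : Set X, IsClopen U → (Set.range fun g : Γ => (fun x => g • x) '' U).Finite)
    (S : Set (Γ → A)) (hS : IsClosed S)
    (hSinv : ∀ (g : Γ) (f : Γ → A), f ∈ S → (fun γ => f (g⁻¹ * γ)) ∈ S)
    (F : X → Γ → A) (hF : Continuous F) (hrange : ∀ x, F x ∈ S)
    (hequiv : ∀ (g : Γ) (x : X) (γ : Γ), F (g • x) γ = F x (g⁻¹ * γ)) :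
    (Set.range F).Finite := by
  classical
  rcases isEmpty_or_nonempty X with hX | hX
  · simp [Set.range_eq_empty F]
  haveI hA : Nonempty A := ⟨F hX.some 1⟩
  -- key equivariance identity
  have key : ∀ (g : Γ) (x : X), F x g = F (g⁻¹ • x) 1 := by
    intro g x
    rw [hequiv g⁻¹ x 1, inv_inv, mul_one]
  set U : A → Set X := fun a => {x | F x 1 = a} with hU
  have hUclopen : ∀ a, IsClopen (U a) := fun a =>
    (isClopen_discrete {a}).preimage ((continuous_apply (1 : Γ)).comp hF)
  set T : Γ → A → Set X := fun g a => {x | F x g = a} with hT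
  have hTimg : ∀ a g, T g a = (fun x => g • x) '' U a := by
    intro a g
    ext x
    constructor
    · intro hx
      refine ⟨g⁻¹ • x, ?_, by simp⟩
      show F (g⁻¹ • x) 1 = a
      exact (key g x).symm.trans hx
    · rintro ⟨y, hy, rfl⟩
      show F (g • y) g = a
      rw [hequiv]
      have hy' : F y 1 = a := hy
      simpa using hy'
  have hTfin : (Set.range T).Finite := by
    have hsub : Set.range T ⊆ Set.pi Set.univ (fun a => Set.range fun g => T g a) := by
      rintro _ ⟨g, rfl⟩ a _
      exact ⟨g, rfl⟩
    refine Set.Finite.subset (Set.Finite.pi fun a => ?_) hsub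
    have heq : (fun g : Γ => T g a) = fun g => (fun x => g • x) '' U a :=
      funext (hTimg a)
    rw [heq]
    exact hodo (U a) (hUclopen a)
  haveI := hTfin.to_subtype
  set ρ : X → (Set.range T → A → Prop) := fun x t a => x ∈ t.1 a with hρ
  set G : (Set.range T → A → Prop) → (Γ → A) := fun φ g =>
    if h : ∃ a, φ ⟨T g, Set.mem_range_self g⟩ a then h.choose else Classical.arbitrary A
    with hG
  have hFG : ∀ x, F x = G (ρ x) := by
    intro x
    funext g
    have hx : ∃ a, ρ x ⟨T g, Set.mem_range_self g⟩ a := ⟨F x g, rfl⟩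
    simp only [hG, dif_pos hx]
    exact hx.choose_spec
  refine Set.Finite.subset (Set.finite_range G) ?_
  rintro _ ⟨x, rfl⟩
  exact ⟨ρ x, (hFG x).symm⟩
end

section
/- Let Γ act by homeomorphisms on a totally separated space X with orbits of unbounded cardinality. Then for every n ≥ 1 the topological full group ⟦Γ⟧ contains a subgroup isomorphic to the symmetric group S_n. In particular, ⟦Γ⟧ satisfies no group law. -/
variable {X : Type*} [TopologicalSpace X]

instance : Group (X ≃ₜ X) where
  mul f g := g.trans f
  one := Homeomorph.refl X
  inv := Homeomorph.symm
  mul_assoc f g h := rfl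
  one_mul f := rfl
  mul_one f := rfl
  inv_mul_cancel f := by ext x; exact f.symm_apply_apply x

@[simp] lemma homeo_mul_apply (f g : X ≃ₜ X) (x : X) : (f * g) x = f (g x) := rfl
@[simp] lemma homeo_inv_apply (f : X ≃ₜ X) (x : X) : (f⁻¹ : X ≃ₜ X) x = f.symm x := rfl

/-- The topological full group of a subgroup `Γ ≤ Homeo(X)`: homeomorphisms locally
coinciding with elements of `Γ`, via a continuous finitely-valued cocycle. -/
def fullGroupOf (Γ : Subgroup (X ≃ₜ X)) : Subgroup (X ≃ₜ X) where
  carrier := {f | ∃ κ : X → (X ≃ₜ X), IsLocallyConstant κ ∧ (Set.range κ).Finite ∧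
      (∀ x, κ x ∈ Γ) ∧ ∀ x, f x = κ x x}
  one_mem' := ⟨fun _ => 1, IsLocallyConstant.const 1,
    (Set.finite_singleton 1).subset (by rintro y ⟨x, rfl⟩; simp),
    fun _ => Γ.one_mem, fun x => rfl⟩
  mul_mem' := by
    rintro f₁ f₂ ⟨κ₁, h₁, hf₁, hm₁, e₁⟩ ⟨κ₂, h₂, hf₂, hm₂, e₂⟩
    refine ⟨fun x => κ₁ (f₂ x) * κ₂ x,
      ((h₁.comp_continuous f₂.continuous).mul h₂),
      (Set.Finite.image2 (· * ·) hf₁ hf₂).subset ?_,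
      fun x => Γ.mul_mem (hm₁ _) (hm₂ _), fun x => ?_⟩
    · rintro y ⟨x, rfl⟩
      exact Set.mem_image2_of_mem (Set.mem_range_self _) (Set.mem_range_self _)
    · have h0 : (f₁ * f₂) x = f₁ (f₂ x) := rfl
      rw [h0, homeo_mul_apply, ← e₂ x]
      exact e₁ (f₂ x)
  inv_mem' := by
    rintro f ⟨κ, h, hf, hm, e⟩
    refine ⟨fun x => (κ (f.symm x))⁻¹,
      (h.comp_continuous f.symm.continuous).comp Inv.inv,
      ((hf.image Inv.inv).subset ?_),
      fun x => Γ.inv_mem (hm _), fun x => ?_⟩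
    · rintro y ⟨x, rfl⟩
      exact ⟨κ (f.symm x), Set.mem_range_self _, rfl⟩
    · have h1 := e (f.symm x)
      rw [f.apply_symm_apply] at h1
      exact (((κ (f.symm x)).symm_apply_eq).mpr h1).symm


section AuxPerm

lemma exists_perm_extend {N : ℕ} (s : Finset (Fin N)) (f : Fin N → Fin N)
    (hf : Set.InjOn f ↑s) : ∃ π : Equiv.Perm (Fin N), ∀ a ∈ s, π a = f a := by
  classical
  set t : Set (Fin N) := ↑s
  set t' : Set (Fin N) := f '' ↑s with ht'
  obtain ⟨e1, he1⟩ : ∃ e : t ≃ t', ∀ a : t, (e a : Fin N) = f a :=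
    ⟨Equiv.ofBijective (fun a => ⟨f a, ⟨a, a.2, rfl⟩⟩)
      ⟨fun a b hab => Subtype.ext (hf a.2 b.2 (congrArg Subtype.val hab)),
       by rintro ⟨_, a, ha, rfl⟩; exact ⟨⟨a, ha⟩, rfl⟩⟩, fun a => rfl⟩
  have hcard : Fintype.card (↥tᶜ) = Fintype.card (↥t'ᶜ) := by
    rw [Fintype.card_compl_set, Fintype.card_compl_set, Fintype.card_congr e1]
  have e2 : (↥tᶜ) ≃ (↥t'ᶜ) := Fintype.equivOfCardEq hcard
  refine ⟨(Equiv.Set.sumCompl t).symm.trans ((e1.sumCongr e2).trans (Equiv.Set.sumCompl t')),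
    fun a ha => ?_⟩
  simp only [Equiv.trans_apply]
  rw [Equiv.Set.sumCompl_symm_apply_of_mem (show a ∈ t from ha)]
  simp [he1]

lemma freeGroup_exists_perm {k : ℕ} (w : FreeGroup (Fin k)) (hw : w ≠ 1) :
    ∃ n : ℕ, 1 ≤ n ∧ ∃ π : Fin k → Equiv.Perm (Fin n), FreeGroup.lift π w ≠ 1 := by
  classical
  set m : List (Fin k × Bool) := w.toWord.reverse with hmdef
  set L : ℕ := m.length with hLdef
  have no_cancel : ∀ (q : ℕ) (i : Fin k) (b : Bool),
      m[q]? = some (i, b) → m[q+1]? = some (i, !b) → False := by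
    intro q i b h1 h2
    obtain ⟨hq1, he1⟩ := List.getElem?_eq_some_iff.mp h1
    obtain ⟨hq2, he2⟩ := List.getElem?_eq_some_iff.mp h2
    have e1 : m.drop q = (i, b) :: (i, !b) :: m.drop (q+2) := by
      rw [List.drop_eq_getElem_cons hq1, he1, List.drop_eq_getElem_cons hq2, he2]
    have e : m = m.take q ++ ((i, b) :: (i, !b) :: m.drop (q+2)) := by
      rw [← e1, List.take_append_drop]
    refine FreeGroup.reduce.not (L₁ := w.toWord) (x := i) (b := !b)
      (L₂ := (m.drop (q+2)).reverse) (L₃ := (m.take q).reverse) ?_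
    rw [FreeGroup.reduce_toWord]
    conv_lhs => rw [show w.toWord = m.reverse from (List.reverse_reverse _).symm, e]
    simp [List.reverse_append, Bool.not_not]
  have hex : ∀ i : Fin k, ∃ π : Equiv.Perm (Fin (L+1)),
      (∀ (q : ℕ) (h : q < L), m[q]? = some (i, true) →
        π ⟨q, by omega⟩ = ⟨q+1, by omega⟩) ∧
      (∀ (q : ℕ) (h : q < L), m[q]? = some (i, false) →
        π ⟨q+1, by omega⟩ = ⟨q, by omega⟩) := by
    intro i
    set f : Fin (L+1) → Fin (L+1) := fun a =>
      if h : m[(a : ℕ)]? = some (i, true) then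
        ⟨(a : ℕ)+1, by
          have := (List.getElem?_eq_some_iff.mp h).1; omega⟩
      else if 0 < (a : ℕ) ∧ m[(a : ℕ)-1]? = some (i, false) then
        ⟨(a : ℕ)-1, by omega⟩
      else a with hfdef
    set s : Finset (Fin (L+1)) := Finset.univ.filter (fun a =>
      m[(a : ℕ)]? = some (i, true) ∨ (0 < (a : ℕ) ∧ m[(a : ℕ)-1]? = some (i, false)))
      with hsdef
    have hmem : ∀ a : Fin (L+1), a ∈ s ↔
        (m[(a : ℕ)]? = some (i, true) ∨ (0 < (a : ℕ) ∧ m[(a : ℕ)-1]? = some (i, false))) := by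
      intro a; simp [hsdef]
    have hinj : Set.InjOn f ↑s := by
      intro a ha b hb hab
      rw [Finset.mem_coe, hmem] at ha hb
      by_cases hA : m[(a : ℕ)]? = some (i, true) <;>
        by_cases hB : m[(b : ℕ)]? = some (i, true)
      · rw [hfdef] at hab; simp only [dif_pos hA, dif_pos hB] at hab
        rw [Fin.mk.injEq] at hab
        exact Fin.ext (by omega)
      · have hQb := hb.resolve_left hB
        rw [hfdef] at hab; simp only [dif_pos hA, dif_neg hB, if_pos hQb] at hab
        rw [Fin.mk.injEq] at hab
        have hv := hab
        have hb2 : (b : ℕ) = (a : ℕ) + 2 := by omega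
        exfalso
        refine no_cancel (a : ℕ) i true hA ?_
        have := hQb.2
        rw [hb2] at this
        simpa using this
      · have hQa := ha.resolve_left hA
        rw [hfdef] at hab; simp only [dif_neg hA, dif_pos hB, if_pos hQa] at hab
        rw [Fin.mk.injEq] at hab
        have hv := hab
        have ha2 : (a : ℕ) = (b : ℕ) + 2 := by omega
        exfalso
        refine no_cancel (b : ℕ) i true hB ?_
        have := hQa.2
        rw [ha2] at this
        simpa using this
      · have hQa := ha.resolve_left hA
        have hQb := hb.resolve_left hB
        rw [hfdef] at hab
        simp only [dif_neg hA, dif_neg hB, if_pos hQa, if_pos hQb] at hab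
        rw [Fin.mk.injEq] at hab
        exact Fin.ext (by omega)
    obtain ⟨π, hπ⟩ := exists_perm_extend s f hinj
    refine ⟨π, fun q hq hcond => ?_, fun q hq hcond => ?_⟩
    · have hmem' : (⟨q, by omega⟩ : Fin (L+1)) ∈ s := (hmem _).mpr (Or.inl hcond)
      rw [hπ _ hmem', hfdef]
      simp only [dif_pos hcond]
    · have hnot : ¬ (m[q+1]? = some (i, true)) := by
        intro hcon
        exact no_cancel q i false hcond (by simpa using hcon)
      have hmem' : (⟨q+1, by omega⟩ : Fin (L+1)) ∈ s :=
        (hmem _).mpr (Or.inr ⟨by simp, by simpa using hcond⟩)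
      rw [hπ _ hmem', hfdef]
      simp only [dif_neg hnot]
      rw [if_pos ⟨by simp, by simpa using hcond⟩]
      exact Fin.ext (by simp)
  choose π hpos hneg using hex
  have key : ∀ (i : Fin k) (b : Bool) (q : ℕ) (h : q < L), m[q]? = some (i, b) →
      (cond b (π i) (π i)⁻¹) ⟨q, by omega⟩ = ⟨q+1, by omega⟩ := by
    intro i b q h hc
    cases b with
    | true => exact hpos i q h hc
    | false =>
      show (π i)⁻¹ _ = _
      rw [Equiv.Perm.inv_def, Equiv.symm_apply_eq]
      exact (hneg i q h hc).symm
  have heval : ∀ (t s : List (Fin k × Bool)), w.toWord = s ++ t →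
      ∀ (ht : t.length < L + 1),
      (List.prod (t.map fun c => cond c.2 (π c.1) (π c.1)⁻¹)) ⟨0, by omega⟩
        = ⟨t.length, ht⟩ := by
    intro t
    induction t with
    | nil => intro s hs ht; simp
    | cons c t ih =>
      intro s hs ht
      have hlen : w.toWord.length = s.length + 1 + t.length := by
        rw [hs]; simp; omega
      have hLlen : L = w.toWord.length := by rw [hLdef, hmdef, List.length_reverse]
      have htL : t.length < L := by omega
      rw [List.map_cons, List.prod_cons, Equiv.Perm.mul_apply,
        ih (s ++ [c]) (by simpa using hs) (by omega)]
      obtain ⟨i, b⟩ := c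
      have hm : m[t.length]? = some (i, b) := by
        have hme : m = t.reverse ++ ((i, b) :: s.reverse) := by
          rw [hmdef, hs]; simp
        rw [hme, List.getElem?_append_right (by simp)]
        simp
      have := key i b t.length htL hm
      simpa using this
  have hL : 0 < L := by
    have h1 : w.toWord ≠ [] := fun h => hw (FreeGroup.toWord_eq_nil_iff.mp h)
    have h2 : w.toWord.length ≠ 0 := fun h => h1 (List.length_eq_zero_iff.mp h)
    rw [hLdef, hmdef, List.length_reverse]; omega
  refine ⟨L + 1, by omega, π, fun hcon => ?_⟩
  have h1 : FreeGroup.lift π w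
      = List.prod (w.toWord.map fun c => cond c.2 (π c.1) (π c.1)⁻¹) := by
    conv_lhs => rw [← FreeGroup.mk_toWord (x := w)]
    exact FreeGroup.lift_mk
  have hLlen : L = w.toWord.length := by rw [hLdef, hmdef, List.length_reverse]
  have h2 := heval w.toWord [] rfl (by omega)
  rw [← h1, hcon] at h2
  have := congrArg Fin.val h2
  simp at this
  omega

end AuxPerm
lemma isClopen_iInter_finite {ι : Type*} [Finite ι] {s : ι → Set X}
    (h : ∀ i, IsClopen (s i)) : IsClopen (⋂ i, s i) :=
  ⟨isClosed_iInter fun i => (h i).1, isOpen_iInter_of_finite fun i => (h i).2⟩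

lemma locallyConstant_eval_continuous {κ : X → (X ≃ₜ X)} (h : IsLocallyConstant κ) :
    Continuous fun z => κ z z := by
  rw [continuous_iff_continuousAt]
  intro z
  obtain ⟨U, hU, hzU, hconst⟩ := (IsLocallyConstant.iff_exists_open κ).mp h z
  have hc : ContinuousAt (fun y => (κ z) y) z := (κ z).continuous.continuousAt
  refine hc.congr ?_
  filter_upwards [hU.mem_nhds hzU] with y hy
  rw [hconst y hy]

lemma embed_perm_aux [TotallySeparatedSpace X]
    (Γ : Subgroup (X ≃ₜ X)) (n : ℕ) (x : X) (g : Fin n → Γ)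
    (hinj : Function.Injective fun i => (↑(g i) : X ≃ₜ X) x) :
    ∃ ι : Equiv.Perm (Fin n) →* ↥(fullGroupOf Γ), Function.Injective ι := by
  classical
  set y : Fin n → X := fun i => (↑(g i) : X ≃ₜ X) x with hydef
  have hyinj : Function.Injective y := hinj
  have hsep : ∀ i j : Fin n, ∃ U : Set X, IsClopen U ∧ y i ∈ U ∧ (i ≠ j → y j ∈ Uᶜ) := by
    intro i j
    by_cases hij : i = j
    · exact ⟨Set.univ, isClopen_univ, trivial, fun h => absurd hij h⟩
    · obtain ⟨U, hU, hyi, hyj⟩ := exists_isClopen_of_totally_separated (hyinj.ne hij)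
      exact ⟨U, hU, hyi, fun _ => hyj⟩
  choose C hCclopen hCmem hCnot using hsep
  set W : Fin n → Set X :=
    fun i => ⋂ j : {j : Fin n // j ≠ i}, (C i j ∩ (C (j : Fin n) i)ᶜ) with hWdef
  have hWclopen : ∀ i, IsClopen (W i) := fun i =>
    isClopen_iInter_finite fun j => (hCclopen i j).inter (hCclopen j i).compl
  have hWmem : ∀ i, y i ∈ W i := fun i =>
    Set.mem_iInter.mpr fun j => ⟨hCmem i j, hCnot (j : Fin n) i j.2⟩
  have hWdisj : ∀ i j, i ≠ j → ∀ z, z ∈ W i → z ∈ W j → False := by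
    intro i j hij z hzi hzj
    have h1 : z ∈ C i j ∩ (C j i)ᶜ := Set.mem_iInter.mp hzi ⟨j, Ne.symm hij⟩
    have h2 : z ∈ C j i ∩ (C i j)ᶜ := Set.mem_iInter.mp hzj ⟨i, hij⟩
    exact h2.2 h1.1
  set V : Set X := ⋂ i, (↑(g i) : X ≃ₜ X) ⁻¹' (W i) with hVdef
  have hVclopen : IsClopen V :=
    isClopen_iInter_finite fun i => (hWclopen i).preimage (↑(g i) : X ≃ₜ X).continuous
  have hxV : x ∈ V := Set.mem_iInter.mpr fun i => hWmem i
  set U : Fin n → Set X := fun i => ((↑(g i) : X ≃ₜ X).symm) ⁻¹' V with hUdef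
  have hUclopen : ∀ i, IsClopen (U i) := fun i =>
    hVclopen.preimage (↑(g i) : X ≃ₜ X).symm.continuous
  have hUy : ∀ i, y i ∈ U i := by
    intro i
    show (↑(g i) : X ≃ₜ X).symm (y i) ∈ V
    rw [hydef]
    simp only
    rw [Homeomorph.symm_apply_apply]
    exact hxV
  have hUsubW : ∀ i z, z ∈ U i → z ∈ W i := by
    intro i z hz
    have h2 : ((↑(g i) : X ≃ₜ X).symm z) ∈ (↑(g i) : X ≃ₜ X) ⁻¹' (W i) :=
      Set.mem_iInter.mp hz i
    simpa [Homeomorph.apply_symm_apply] using h2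
  have hUdisj : ∀ z (i j : Fin n), z ∈ U i → z ∈ U j → i = j := by
    intro z i j hi hj
    by_contra hij
    exact hWdisj i j hij z (hUsubW i z hi) (hUsubW j z hj)
  have htrans : ∀ i j z, z ∈ U i → (↑(g j) : X ≃ₜ X) ((↑(g i) : X ≃ₜ X).symm z) ∈ U j := by
    intro i j z hz
    show (↑(g j) : X ≃ₜ X).symm ((↑(g j) : X ≃ₜ X) _) ∈ V
    rw [Homeomorph.symm_apply_apply]
    exact hz
  set K : Equiv.Perm (Fin n) → X → (X ≃ₜ X) := fun σ z =>
    if h : ∃ i, z ∈ U i then (↑(g (σ h.choose)) : X ≃ₜ X) * (↑(g h.choose) : X ≃ₜ X)⁻¹ else 1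
    with hKdef
  have hKval : ∀ σ z i, z ∈ U i →
      K σ z = (↑(g (σ i)) : X ≃ₜ X) * (↑(g i) : X ≃ₜ X)⁻¹ := by
    intro σ z i hi
    have h : ∃ i, z ∈ U i := ⟨i, hi⟩
    have hch : h.choose = i := hUdisj z h.choose i h.choose_spec hi
    simp only [hKdef, dif_pos h, hch]
  have hKone : ∀ σ z, (∀ i, z ∉ U i) → K σ z = 1 := by
    intro σ z hz
    simp only [hKdef]
    rw [dif_neg]
    rintro ⟨i, hi⟩
    exact hz i hi
  set Φ : Equiv.Perm (Fin n) → X → X := fun σ z => K σ z z with hΦdef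
  have hΦmem : ∀ σ i z, z ∈ U i →
      Φ σ z = (↑(g (σ i)) : X ≃ₜ X) ((↑(g i) : X ≃ₜ X).symm z) := by
    intro σ i z hz
    simp only [hΦdef, hKval σ z i hz, homeo_mul_apply, homeo_inv_apply]
  have hΦid : ∀ σ z, (∀ i, z ∉ U i) → Φ σ z = z := by
    intro σ z hz
    simp only [hΦdef, hKone σ z hz]
    rfl
  have hΦU : ∀ σ i z, z ∈ U i → Φ σ z ∈ U (σ i) := by
    intro σ i z hz
    rw [hΦmem σ i z hz]
    exact htrans i (σ i) z hz
  have hΦcomp : ∀ σ τ z, Φ σ (Φ τ z) = Φ (σ * τ) z := by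
    intro σ τ z
    by_cases h : ∃ i, z ∈ U i
    · obtain ⟨i, hi⟩ := h
      rw [hΦmem σ (τ i) _ (hΦU τ i z hi), hΦmem τ i z hi, hΦmem (σ * τ) i z hi,
        Homeomorph.symm_apply_apply]
      rfl
    · push_neg at h
      rw [hΦid τ z h, hΦid σ z h, hΦid (σ * τ) z h]
  have hΦone : ∀ z, Φ 1 z = z := by
    intro z
    by_cases h : ∃ i, z ∈ U i
    · obtain ⟨i, hi⟩ := h
      rw [hΦmem 1 i z hi]
      exact Homeomorph.apply_symm_apply _ _
    · push_neg at h
      exact hΦid 1 z h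
  have hKlc : ∀ σ, IsLocallyConstant (K σ) := by
    intro σ
    rw [IsLocallyConstant.iff_exists_open]
    intro z
    by_cases h : ∃ i, z ∈ U i
    · obtain ⟨i, hi⟩ := h
      refine ⟨U i, (hUclopen i).2, hi, fun z' hz' => ?_⟩
      rw [hKval σ z' i hz', hKval σ z i hi]
    · push_neg at h
      refine ⟨(⋃ i, U i)ᶜ, ?_, ?_, fun z' hz' => ?_⟩
      · exact (isClosed_iUnion_of_finite fun i => (hUclopen i).1).isOpen_compl
      · simpa using h
      · have h' : ∀ i, z' ∉ U i := by simpa using hz'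
        rw [hKone σ z' h', hKone σ z h]
  have hΦcont : ∀ σ, Continuous (Φ σ) := by
    intro σ
    have := locallyConstant_eval_continuous (hKlc σ)
    simpa only [hΦdef] using this
  set F : Equiv.Perm (Fin n) → (X ≃ₜ X) := fun σ =>
    { toFun := Φ σ
      invFun := Φ σ⁻¹
      left_inv := fun z => by rw [hΦcomp σ⁻¹ σ z, inv_mul_cancel]; exact hΦone z
      right_inv := fun z => by rw [hΦcomp σ σ⁻¹ z, mul_inv_cancel]; exact hΦone z
      continuous_toFun := hΦcont σ
      continuous_invFun := hΦcont σ⁻¹ } with hFdef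
  have hFapp : ∀ σ z, F σ z = Φ σ z := fun σ z => rfl
  have hFmem : ∀ σ, F σ ∈ fullGroupOf Γ := by
    intro σ
    refine ⟨K σ, hKlc σ, ?_, ?_, fun z => rfl⟩
    · apply ((Set.finite_range
        (fun i : Fin n => (↑(g (σ i)) : X ≃ₜ X) * (↑(g i) : X ≃ₜ X)⁻¹)).insert 1).subset
      rintro v ⟨z, rfl⟩
      simp only [hKdef]
      split_ifs with h
      · exact Set.mem_insert_iff.mpr (Or.inr ⟨h.choose, rfl⟩)
      · exact Set.mem_insert _ _
    · intro z
      simp only [hKdef]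
      split_ifs with h
      · exact Γ.mul_mem (g _).2 (Γ.inv_mem (g _).2)
      · exact Γ.one_mem
  have hFy : ∀ σ i, F σ (y i) = y (σ i) := by
    intro σ i
    rw [hFapp, hΦmem σ i _ (hUy i), hydef]
    simp only
    rw [Homeomorph.symm_apply_apply]
  refine ⟨{ toFun := fun σ => ⟨F σ, hFmem σ⟩
            map_one' := ?_
            map_mul' := ?_ }, ?_⟩
  · exact Subtype.ext (Homeomorph.ext fun z => (hFapp 1 z).trans (hΦone z))
  · intro σ τ
    refine Subtype.ext (Homeomorph.ext fun z => ?_)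
    show F (σ * τ) z = F σ (F τ z)
    rw [hFapp, hFapp, hFapp, hΦcomp]
  · intro σ τ h
    have h1 : F σ = F τ := congrArg Subtype.val h
    by_contra hne
    obtain ⟨i, hi⟩ : ∃ i, σ i ≠ τ i := by
      by_contra hq
      push_neg at hq
      exact hne (Equiv.ext hq)
    have h2 := hFy σ i
    rw [h1, hFy τ i] at h2
    exact hi (hyinj h2.symm).symm.symm

/-- if `Γ ≤ Homeo(X)` has orbits of unbounded cardinality on a totally
separated space, then for every `n` the topological full group contains a copy of the
symmetric group `S_n`; in particular it satisfies no group law. -/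
theorem statement2 {X : Type*} [TopologicalSpace X] [TotallySeparatedSpace X]
    (Γ : Subgroup (X ≃ₜ X))
    (horb : ∀ n : ℕ, ∃ (x : X) (t : Finset X),
      (↑t : Set X) ⊆ Set.range (fun g : Γ => (g : X ≃ₜ X) x) ∧ n ≤ t.card) :
    (∀ n : ℕ, 1 ≤ n → ∃ ι : Equiv.Perm (Fin n) →* ↥(fullGroupOf Γ), Function.Injective ι) ∧
    ∀ (k : ℕ) (w : FreeGroup (Fin k)), w ≠ 1 →
      ∃ g : Fin k → ↥(fullGroupOf Γ), (FreeGroup.lift g) w ≠ 1 := by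
  classical
  have main : ∀ n : ℕ, ∃ ι : Equiv.Perm (Fin n) →* ↥(fullGroupOf Γ), Function.Injective ι := by
    intro n
    obtain ⟨x, t, hsub, hcard⟩ := horb n
    have hy : ∀ i : Fin n, ((t.equivFin.symm (Fin.castLE hcard i) : X) ∈ (↑t : Set X)) :=
      fun i => (t.equivFin.symm _).2
    choose g hgx using fun i => hsub (hy i)
    refine embed_perm_aux Γ n x g ?_
    intro i j hij
    simp only [hgx] at hij
    exact Fin.castLE_injective hcard (t.equivFin.symm.injective (Subtype.coe_injective hij))
  refine ⟨fun n _ => main n, fun k w hw => ?_⟩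
  obtain ⟨N, hN, π, hπ⟩ := freeGroup_exists_perm w hw
  obtain ⟨ι, hι⟩ := main N
  refine ⟨fun j => ι (π j), fun hcon => ?_⟩
  have hcomm : FreeGroup.lift (fun j => ι (π j)) = ι.comp (FreeGroup.lift π) :=
    FreeGroup.ext_hom _ _ (by intro a; simp)
  rw [hcomm] at hcon
  simp only [MonoidHom.comp_apply] at hcon
  exact hπ (hι (by rw [map_one]; exact hcon))
end

section
/- Let X be totally separated and Γ ≤ Homeo(X). Then the topological full group ⟦Γ⟧ acts ∞-transitively on every Γ-orbit: for every n, it acts transitively on n-tuples of distinct points of any Γ-orbit. Moreover the derived subgroup ⟦Γ⟧' acts (n−2)-transitively on every Γ-orbit of cardinality at least n. -/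
variable {X : Type*} [TopologicalSpace X]

section AuxSwap

open Classical in
noncomputable def swapCocycle (γ : X ≃ₜ X) (U : Set X) (x : X) : X ≃ₜ X :=
  if x ∈ U then γ else if x ∈ γ '' U then γ⁻¹ else 1

lemma swapCocycle_locallyConstant (γ : X ≃ₜ X) (U : Set X) (hU : IsClopen U)
    (hd : Disjoint U (γ '' U)) : IsLocallyConstant (swapCocycle γ U) := by
  have hgU : IsClopen (γ '' U) := ⟨γ.isClosed_image.mpr hU.1, γ.isOpen_image.mpr hU.2⟩
  rw [IsLocallyConstant.iff_exists_open]
  intro x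
  by_cases h1 : x ∈ U
  · refine ⟨U, hU.2, h1, fun y hy => ?_⟩
    simp [swapCocycle, hy, h1]
  · by_cases h2 : x ∈ γ '' U
    · refine ⟨γ '' U, hgU.2, h2, fun y hy => ?_⟩
      have hy1 : y ∉ U := fun h => Set.disjoint_left.mp hd h hy
      simp [swapCocycle, hy, hy1, h1, h2]
    · refine ⟨(U ∪ γ '' U)ᶜ, (hU.1.union hgU.1).isOpen_compl, by simp [h1, h2], fun y hy => ?_⟩
      simp only [Set.mem_compl_iff, Set.mem_union, not_or] at hy
      simp [swapCocycle, hy.1, hy.2, h1, h2]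

lemma swapCocycle_involutive (γ : X ≃ₜ X) (U : Set X) (hd : Disjoint U (γ '' U)) :
    Function.Involutive (fun x => swapCocycle γ U x x) := by
  intro x
  show swapCocycle γ U (swapCocycle γ U x x) (swapCocycle γ U x x) = x
  by_cases h1 : x ∈ U
  · have h2 : γ x ∈ γ '' U := ⟨x, h1, rfl⟩
    have h3 : γ x ∉ U := fun h => Set.disjoint_left.mp hd h h2
    have e1 : swapCocycle γ U x = γ := by simp [swapCocycle, h1]
    have e2 : swapCocycle γ U (γ x) = γ⁻¹ := by simp [swapCocycle, h3, h2]
    rw [e1, e2]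
    exact γ.symm_apply_apply x
  · by_cases h2 : x ∈ γ '' U
    · have e1 : swapCocycle γ U x = γ⁻¹ := by simp [swapCocycle, h1, h2]
      rw [e1]
      obtain ⟨u, hu, rfl⟩ := h2
      have e3 : (γ⁻¹ : X ≃ₜ X) (γ u) = u := γ.symm_apply_apply u
      rw [e3]
      have e4 : swapCocycle γ U u = γ := by simp [swapCocycle, hu]
      rw [e4]
    · have e1 : swapCocycle γ U x = 1 := by simp [swapCocycle, h1, h2]
      have e2 : (1 : X ≃ₜ X) x = x := rfl
      rw [e1, e2, e1, e2]

lemma cocycle_apply_continuous {κ : X → (X ≃ₜ X)} (h : IsLocallyConstant κ) :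
    Continuous fun x => κ x x := by
  rw [continuous_iff_continuousAt]
  intro x
  have hmem : {y | κ y = κ x} ∈ nhds x := (h.isOpen_fiber (κ x)).mem_nhds rfl
  refine ((κ x).continuous.continuousAt).congr ?_
  filter_upwards [hmem] with y hy
  exact congrArg (fun g : X ≃ₜ X => g y) hy.symm

noncomputable def swapHomeo (γ : X ≃ₜ X) (U : Set X) (hU : IsClopen U)
    (hd : Disjoint U (γ '' U)) : X ≃ₜ X where
  toEquiv := (swapCocycle_involutive γ U hd).toPerm
  continuous_toFun := cocycle_apply_continuous (swapCocycle_locallyConstant γ U hU hd)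
  continuous_invFun := cocycle_apply_continuous (swapCocycle_locallyConstant γ U hU hd)

lemma swapHomeo_apply (γ : X ≃ₜ X) (U : Set X) (hU : IsClopen U)
    (hd : Disjoint U (γ '' U)) (x : X) : swapHomeo γ U hU hd x = swapCocycle γ U x x := rfl

lemma swapHomeo_sq (γ : X ≃ₜ X) (U : Set X) (hU : IsClopen U)
    (hd : Disjoint U (γ '' U)) : swapHomeo γ U hU hd * swapHomeo γ U hU hd = 1 := by
  ext x
  exact swapCocycle_involutive γ U hd x

lemma swapHomeo_mem (Γ : Subgroup (X ≃ₜ X)) {γ : X ≃ₜ X} (hγ : γ ∈ Γ) (U : Set X)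
    (hU : IsClopen U) (hd : Disjoint U (γ '' U)) :
    swapHomeo γ U hU hd ∈ fullGroupOf Γ := by
  refine ⟨swapCocycle γ U, swapCocycle_locallyConstant γ U hU hd, ?_, ?_, fun x => rfl⟩
  · refine ((Set.finite_singleton γ).union ((Set.finite_singleton γ⁻¹).union
      (Set.finite_singleton 1))).subset ?_
    rintro y ⟨x, rfl⟩
    simp only [swapCocycle]
    split_ifs <;> simp
  · intro x
    simp only [swapCocycle]
    split_ifs
    · exact hγ
    · exact Γ.inv_mem hγ
    · exact Γ.one_mem

lemma exists_clopen_avoiding [TotallySeparatedSpace X] (a : X) (S : Finset X) :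
    ∃ C : Set X, IsClopen C ∧ a ∈ C ∧ ∀ s ∈ S, s ≠ a → s ∉ C := by
  classical
  induction S using Finset.induction_on with
  | empty => exact ⟨Set.univ, isClopen_univ, trivial, by simp⟩
  | @insert s S hsS ih =>
    obtain ⟨C, hC, haC, hSC⟩ := ih
    by_cases hsa : s = a
    · refine ⟨C, hC, haC, fun t ht hta => ?_⟩
      rcases Finset.mem_insert.mp ht with rfl | ht
      · exact absurd hsa hta
      · exact hSC t ht hta
    · obtain ⟨D, hD, haD, hsD⟩ := exists_isClopen_of_totally_separated (Ne.symm hsa)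
      refine ⟨C ∩ D, hC.inter hD, ⟨haC, haD⟩, fun t ht hta => ?_⟩
      rcases Finset.mem_insert.mp ht with rfl | ht
      · exact fun h => hsD h.2
      · exact fun h => hSC t ht hta h.1

lemma fullGroup_maps_orbit (Γ : Subgroup (X ≃ₜ X)) {f : X ≃ₜ X} (hf : f ∈ fullGroupOf Γ)
    {x₀ a : X} (ha : ∃ g : Γ, (g : X ≃ₜ X) x₀ = a) :
    ∃ g : Γ, (g : X ≃ₜ X) x₀ = f a := by
  obtain ⟨κ, -, -, hm, e⟩ := hf
  obtain ⟨g, rfl⟩ := ha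
  refine ⟨⟨κ ((g : X ≃ₜ X) x₀) * (g : X ≃ₜ X), Γ.mul_mem (hm _) g.2⟩, ?_⟩
  show (κ ((g : X ≃ₜ X) x₀) * (g : X ≃ₜ X)) x₀ = f ((g : X ≃ₜ X) x₀)
  rw [homeo_mul_apply]
  exact (e _).symm

lemma exists_nice_swap [TotallySeparatedSpace X] (Γ : Subgroup (X ≃ₜ X)) (x₀ : X)
    {a b : X} (ha : ∃ g : Γ, (g : X ≃ₜ X) x₀ = a) (hb : ∃ g : Γ, (g : X ≃ₜ X) x₀ = b)
    (hab : a ≠ b) (S : Finset X) (haS : a ∉ S) (hbS : b ∉ S) :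
    ∃ f ∈ fullGroupOf Γ, f a = b ∧ f b = a ∧ (∀ s ∈ S, f s = s) ∧ f * f = 1 := by
  obtain ⟨ga, hga⟩ := ha
  obtain ⟨gb, hgb⟩ := hb
  have hγΓ : (gb : X ≃ₜ X) * (ga : X ≃ₜ X)⁻¹ ∈ Γ := Γ.mul_mem gb.2 (Γ.inv_mem ga.2)
  set γ : X ≃ₜ X := (gb : X ≃ₜ X) * (ga : X ≃ₜ X)⁻¹ with hγdef
  have hγa : γ a = b := by
    have h1 : (ga : X ≃ₜ X).symm a = x₀ := by
      rw [← hga]; exact (ga : X ≃ₜ X).symm_apply_apply x₀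
    rw [hγdef, homeo_mul_apply, homeo_inv_apply, h1, hgb]
  obtain ⟨C, hC, haC, hbC⟩ := exists_isClopen_of_totally_separated hab
  obtain ⟨V₀, hV₀, haV₀, hSV₀⟩ := exists_clopen_avoiding a S
  obtain ⟨W₀, hW₀, hbW₀, hSW₀⟩ := exists_clopen_avoiding b S
  have hWclopen : IsClopen (Cᶜ ∩ W₀) := hC.compl.inter hW₀
  set U : Set X := (C ∩ V₀) ∩ γ ⁻¹' (Cᶜ ∩ W₀) with hUdef
  have hUclopen : IsClopen U := (hC.inter hV₀).inter (hWclopen.preimage γ.continuous)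
  have haU : a ∈ U := ⟨⟨haC, haV₀⟩, by show γ a ∈ Cᶜ ∩ W₀; rw [hγa]; exact ⟨hbC, hbW₀⟩⟩
  have hgUW : γ '' U ⊆ Cᶜ ∩ W₀ := by rintro - ⟨z, hz, rfl⟩; exact hz.2
  have hd : Disjoint U (γ '' U) :=
    Set.disjoint_left.mpr fun z hzU hzI => (hgUW hzI).1 hzU.1.1
  have hSU : ∀ s ∈ S, s ∉ U := fun s hs h =>
    hSV₀ s hs (fun h' => haS (h' ▸ hs)) h.1.2
  have hSgU : ∀ s ∈ S, s ∉ γ '' U := fun s hs h =>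
    hSW₀ s hs (fun h' => hbS (h' ▸ hs)) (hgUW h).2
  refine ⟨swapHomeo γ U hUclopen hd, swapHomeo_mem Γ hγΓ U hUclopen hd, ?_, ?_, ?_,
    swapHomeo_sq γ U hUclopen hd⟩
  · rw [swapHomeo_apply]
    have e : swapCocycle γ U a = γ := by simp [swapCocycle, haU]
    rw [e, hγa]
  · rw [swapHomeo_apply]
    have hbgU : b ∈ γ '' U := ⟨a, haU, hγa⟩
    have hbU : b ∉ U := fun h => Set.disjoint_left.mp hd h hbgU
    have e : swapCocycle γ U b = γ⁻¹ := by simp [swapCocycle, hbU, hbgU]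
    rw [e, homeo_inv_apply, ← hγa, γ.symm_apply_apply]
  · intro s hs
    rw [swapHomeo_apply]
    have e : swapCocycle γ U s = 1 := by simp [swapCocycle, hSU s hs, hSgU s hs]
    rw [e]
    rfl

open scoped commutatorElement in
lemma exists_threeCycle [TotallySeparatedSpace X] (Γ : Subgroup (X ≃ₜ X)) (x₀ : X)
    {a b c : X} (ha : ∃ g : Γ, (g : X ≃ₜ X) x₀ = a) (hb : ∃ g : Γ, (g : X ≃ₜ X) x₀ = b)
    (hc : ∃ g : Γ, (g : X ≃ₜ X) x₀ = c)
    (hab : a ≠ b) (hac : a ≠ c) (hbc : b ≠ c) (S : Finset X)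
    (haS : a ∉ S) (hbS : b ∉ S) (hcS : c ∉ S) :
    ∃ f ∈ ⁅fullGroupOf Γ, fullGroupOf Γ⁆, f a = b ∧ ∀ s ∈ S, f s = s := by
  classical
  obtain ⟨τ, hτmem, hτa, hτc, hτfix, hτsq⟩ := exists_nice_swap Γ x₀ ha hc hac (insert b S)
    (by simp [Finset.mem_insert, hab, haS]) (by simp [Finset.mem_insert, Ne.symm hbc, hcS])
  obtain ⟨σ, hσmem, hσa, hσb, hσfix, hσsq⟩ := exists_nice_swap Γ x₀ ha hb hab (insert c S)
    (by simp [Finset.mem_insert, hac, haS]) (by simp [Finset.mem_insert, hbc, hbS])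
  have hσinv : σ⁻¹ = σ := inv_eq_of_mul_eq_one_right hσsq
  have hτinv : τ⁻¹ = τ := inv_eq_of_mul_eq_one_right hτsq
  refine ⟨⁅σ, τ⁆, Subgroup.commutator_mem_commutator hσmem hτmem, ?_, ?_⟩
  · show (σ * τ * σ⁻¹ * τ⁻¹) a = b
    rw [hσinv, hτinv, homeo_mul_apply, homeo_mul_apply, homeo_mul_apply, hτa,
      hσfix c (Finset.mem_insert_self c S), hτc]
    exact hσa
  · intro s hs
    show (σ * τ * σ⁻¹ * τ⁻¹) s = s
    rw [hσinv, hτinv, homeo_mul_apply, homeo_mul_apply, homeo_mul_apply,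
      hτfix s (Finset.mem_insert_of_mem hs), hσfix s (Finset.mem_insert_of_mem hs),
      hτfix s (Finset.mem_insert_of_mem hs), hσfix s (Finset.mem_insert_of_mem hs)]

lemma full_part1 [TotallySeparatedSpace X] (Γ : Subgroup (X ≃ₜ X)) (x₀ : X) :
    ∀ (n : ℕ) (x y : Fin n → X), Function.Injective x → Function.Injective y →
      (∀ i, ∃ g : Γ, (g : X ≃ₜ X) x₀ = x i) → (∀ i, ∃ g : Γ, (g : X ≃ₜ X) x₀ = y i) →
      ∃ f ∈ fullGroupOf Γ, ∀ i, f (x i) = y i := by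
  intro n
  induction n with
  | zero => exact fun x y _ _ _ _ => ⟨1, (fullGroupOf Γ).one_mem, fun i => i.elim0⟩
  | succ n IH =>
    intro x y hx hy hxo hyo
    obtain ⟨f₀, hf₀, he₀⟩ := IH (fun i => x i.castSucc) (fun i => y i.castSucc)
      (fun i j h => Fin.castSucc_injective n (hx h)) (fun i j h => Fin.castSucc_injective n (hy h))
      (fun i => hxo _) (fun i => hyo _)
    classical
    have haS : f₀ (x (Fin.last n)) ∉
        Finset.image (fun i : Fin n => y i.castSucc) Finset.univ := by
      intro hmem
      obtain ⟨i, -, hi⟩ := Finset.mem_image.mp hmem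
      have h1 : f₀ (x i.castSucc) = f₀ (x (Fin.last n)) := (he₀ i).trans hi
      exact absurd (hx (f₀.injective h1)) (Fin.castSucc_lt_last i).ne
    have hbS : y (Fin.last n) ∉
        Finset.image (fun i : Fin n => y i.castSucc) Finset.univ := by
      intro hmem
      obtain ⟨i, -, hi⟩ := Finset.mem_image.mp hmem
      exact absurd (hy hi) (Fin.castSucc_lt_last i).ne
    by_cases hab : f₀ (x (Fin.last n)) = y (Fin.last n)
    · exact ⟨f₀, hf₀, fun i => Fin.lastCases hab (fun j => he₀ j) i⟩
    · obtain ⟨g, hg, hga, -, hgfix, -⟩ := exists_nice_swap Γ x₀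
        (fullGroup_maps_orbit Γ hf₀ (hxo (Fin.last n))) (hyo (Fin.last n)) hab _ haS hbS
      refine ⟨g * f₀, (fullGroupOf Γ).mul_mem hg hf₀, fun i => ?_⟩
      refine Fin.lastCases ?_ (fun j => ?_) i
      · rw [homeo_mul_apply]
        exact hga
      · rw [homeo_mul_apply, he₀ j]
        exact hgfix _ (Finset.mem_image_of_mem _ (Finset.mem_univ j))

lemma full_part2 [TotallySeparatedSpace X] (Γ : Subgroup (X ≃ₜ X)) (x₀ : X) :
    ∀ (m : ℕ) (t : Finset X), (∀ c ∈ t, ∃ g : Γ, (g : X ≃ₜ X) x₀ = c) → m + 2 ≤ t.card →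
      ∀ (x y : Fin m → X), Function.Injective x → Function.Injective y →
      (∀ i, ∃ g : Γ, (g : X ≃ₜ X) x₀ = x i) → (∀ i, ∃ g : Γ, (g : X ≃ₜ X) x₀ = y i) →
      ∃ f ∈ ⁅fullGroupOf Γ, fullGroupOf Γ⁆, ∀ i, f (x i) = y i := by
  have hcomm_le : ⁅fullGroupOf Γ, fullGroupOf Γ⁆ ≤ fullGroupOf Γ :=
    Subgroup.commutator_le.mpr fun g₁ h₁ g₂ h₂ => by
      rw [commutatorElement_def]
      exact (fullGroupOf Γ).mul_mem ((fullGroupOf Γ).mul_mem ((fullGroupOf Γ).mul_mem h₁ h₂)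
        ((fullGroupOf Γ).inv_mem h₁)) ((fullGroupOf Γ).inv_mem h₂)
  intro m
  induction m with
  | zero => exact fun t _ _ x y _ _ _ _ => ⟨1, Subgroup.one_mem _, fun i => i.elim0⟩
  | succ m IH =>
    intro t hto htc x y hx hy hxo hyo
    obtain ⟨f₀, hf₀, he₀⟩ := IH t hto (by omega) (fun i => x i.castSucc) (fun i => y i.castSucc)
      (fun i j h => Fin.castSucc_injective m (hx h)) (fun i j h => Fin.castSucc_injective m (hy h))
      (fun i => hxo _) (fun i => hyo _)
    classical
    have haS : f₀ (x (Fin.last m)) ∉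
        Finset.image (fun i : Fin m => y i.castSucc) Finset.univ := by
      intro hmem
      obtain ⟨i, -, hi⟩ := Finset.mem_image.mp hmem
      have h1 : f₀ (x i.castSucc) = f₀ (x (Fin.last m)) := (he₀ i).trans hi
      exact absurd (hx (f₀.injective h1)) (Fin.castSucc_lt_last i).ne
    have hbS : y (Fin.last m) ∉
        Finset.image (fun i : Fin m => y i.castSucc) Finset.univ := by
      intro hmem
      obtain ⟨i, -, hi⟩ := Finset.mem_image.mp hmem
      exact absurd (hy hi) (Fin.castSucc_lt_last i).ne
    by_cases hab : f₀ (x (Fin.last m)) = y (Fin.last m)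
    · exact ⟨f₀, hf₀, fun i => Fin.lastCases hab (fun j => he₀ j) i⟩
    · have hScard : (Finset.image (fun i : Fin m => y i.castSucc) Finset.univ).card ≤ m :=
        Finset.card_image_le.trans (by simp)
      have hex : ∃ c ∈ t, c ∉ insert (f₀ (x (Fin.last m))) (insert (y (Fin.last m))
          (Finset.image (fun i : Fin m => y i.castSucc) Finset.univ)) := by
        by_contra h
        push_neg at h
        have hcard := Finset.card_le_card h
        have h1 := Finset.card_insert_le (f₀ (x (Fin.last m))) (insert (y (Fin.last m))
          (Finset.image (fun i : Fin m => y i.castSucc) Finset.univ))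
        have h2 := Finset.card_insert_le (y (Fin.last m))
          (Finset.image (fun i : Fin m => y i.castSucc) Finset.univ)
        omega
      obtain ⟨c, hct, hcbad⟩ := hex
      simp only [Finset.mem_insert, not_or] at hcbad
      obtain ⟨hca, hcb, hcS⟩ := hcbad
      obtain ⟨g, hg, hga, hgfix⟩ := exists_threeCycle Γ x₀
        (fullGroup_maps_orbit Γ (hcomm_le hf₀) (hxo (Fin.last m))) (hyo (Fin.last m))
        (hto c hct) hab (Ne.symm hca) (Ne.symm hcb) _ haS hbS hcS
      refine ⟨g * f₀, Subgroup.mul_mem _ hg hf₀, fun i => ?_⟩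
      refine Fin.lastCases ?_ (fun j => ?_) i
      · rw [homeo_mul_apply]
        exact hga
      · rw [homeo_mul_apply, he₀ j]
        exact hgfix _ (Finset.mem_image_of_mem _ (Finset.mem_univ j))

end AuxSwap

/-- the topological full group of `Γ ≤ Homeo(X)` (`X` totally separated)
acts `∞`-transitively on each `Γ`-orbit, and its derived subgroup acts `(n-2)`-transitively
on each orbit of cardinality at least `n`. -/
theorem statement3 {X : Type*} [TopologicalSpace X] [TotallySeparatedSpace X]
    (Γ : Subgroup (X ≃ₜ X)) :
    (∀ (n : ℕ) (x₀ : X) (x y : Fin n → X), Function.Injective x → Function.Injective y →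
      (∀ i, x i ∈ Set.range (fun g : Γ => (g : X ≃ₜ X) x₀)) →
      (∀ i, y i ∈ Set.range (fun g : Γ => (g : X ≃ₜ X) x₀)) →
      ∃ f ∈ fullGroupOf Γ, ∀ i, f (x i) = y i) ∧
    ∀ (n : ℕ) (x₀ : X),
      (∃ t : Finset X, (↑t : Set X) ⊆ Set.range (fun g : Γ => (g : X ≃ₜ X) x₀) ∧ n ≤ t.card) →
      ∀ (x y : Fin (n - 2) → X), Function.Injective x → Function.Injective y →
      (∀ i, x i ∈ Set.range (fun g : Γ => (g : X ≃ₜ X) x₀)) →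
      (∀ i, y i ∈ Set.range (fun g : Γ => (g : X ≃ₜ X) x₀)) →
      ∃ f ∈ ⁅fullGroupOf Γ, fullGroupOf Γ⁆, ∀ i, f (x i) = y i := by
  constructor
  · intro n x₀ x y hx hy hxo hyo
    exact full_part1 Γ x₀ n x y hx hy (fun i => hxo i) (fun i => hyo i)
  · intro n x₀ ht x y hx hy hxo hyo
    obtain ⟨t, hts, htc⟩ := ht
    by_cases hn : 2 ≤ n
    · exact full_part2 Γ x₀ (n - 2) t (fun c hc => hts hc) (by omega) x y hx hy
        (fun i => hxo i) (fun i => hyo i)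
    · exact ⟨1, Subgroup.one_mem _, fun i => absurd i.isLt (by omega)⟩
end

section
/- Let X be a compact space, ψ a homeomorphism of X, and A a clopen ψ-omniscient subset. Let ψ_A be the first-return map (ψ_A(x) = ψ^{k(x)}(x), where k(x) is the smallest positive n with ψⁿ(x) ∈ A if x ∈ A, and k(x) = 0 otherwise). Then the homeomorphism ψ⁻¹∘ψ_A is periodic: there exists n ≥ 1 with (ψ⁻¹∘ψ_A)ⁿ = id. -/
variable {X : Type*} [TopologicalSpace X]

/-- for `A` a clopen `ψ`-omniscient set and `ψ_A` the first-return map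
(given by the return time `r`), the map `ψ⁻¹ ∘ ψ_A : x ↦ ψ^(r x - 1) x` is periodic. -/
theorem statement5 [CompactSpace X] (ψ : X ≃ₜ X) (A : Set X) (hA : IsClopen A)
    (homni : (⋃ n : ℤ, (ψ ^ n) '' A) = Set.univ) (r : X → ℤ)
    (hr0 : ∀ x ∉ A, r x = 0)
    (hrpos : ∀ x ∈ A, 0 < r x ∧ (ψ ^ r x) x ∈ A ∧
      ∀ m : ℤ, 0 < m → m < r x → (ψ ^ m) x ∉ A) :
    ∃ n : ℕ, 1 ≤ n ∧ ∀ x : X, (fun y => (ψ ^ (r y - 1)) y)^[n] x = x := by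
  classical
  have happ : ∀ (m n : ℤ) (x : X), (ψ ^ m) ((ψ ^ n) x) = (ψ ^ (m + n)) x := by
    intro m n x
    rw [zpow_add]
    rfl
  have hzero : ∀ x : X, (ψ ^ (0 : ℤ)) x = x := by
    intro x; rw [zpow_zero]; rfl
  have hcont : ∀ m : ℤ, Continuous fun x : X => (ψ ^ m) x := fun m => (ψ ^ m).continuous
  set φ : X → X := fun y => (ψ ^ (r y - 1)) y with hφ
  -- Step 1 : the return time is bounded on A
  have hAco : IsCompact A := hA.isClosed.isCompact
  obtain ⟨M, hM1, hMr⟩ : ∃ M : ℕ, 1 ≤ M ∧ ∀ x ∈ A, r x ≤ (M : ℤ) := by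
    have hcover : A ⊆ ⋃ m : ℕ, (fun x => (ψ ^ ((m : ℤ) + 1)) x) ⁻¹' A := by
      intro x hx
      obtain ⟨hpos, hret, -⟩ := hrpos x hx
      refine Set.mem_iUnion.2 ⟨(r x - 1).toNat, ?_⟩
      have h1 : ((r x - 1).toNat : ℤ) + 1 = r x := by
        rw [Int.toNat_of_nonneg (by omega)]; omega
      show (ψ ^ (((r x - 1).toNat : ℤ) + 1)) x ∈ A
      rw [h1]; exact hret
    obtain ⟨s, hs⟩ := hAco.elim_finite_subcover _
      (fun m : ℕ => hA.isOpen.preimage (hcont _)) hcover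
    refine ⟨s.sup id + 1, by omega, ?_⟩
    intro x hx
    obtain ⟨m, hms, hmem⟩ := Set.mem_iUnion₂.1 (hs hx)
    have : (ψ ^ ((m : ℤ) + 1)) x ∈ A := hmem
    have hle : ¬ ((m : ℤ) + 1 < r x) := fun hlt => (hrpos x hx).2.2 _ (by omega) hlt this
    have : m ≤ s.sup id := Finset.le_sup (f := id) hms
    push_cast
    omega
  -- Step 2 : the backward orbit of every point meets A
  have hback : ∀ x : X, ∃ j : ℕ, (ψ ^ (-(j : ℤ))) x ∈ A := by
    by_contra hcon
    push_neg at hcon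
    obtain ⟨x, hx⟩ := hcon
    set C : Set X := ⋂ j : ℕ, (fun y => (ψ ^ (-(j : ℤ))) y) ⁻¹' Aᶜ with hC
    have hxC : x ∈ C := Set.mem_iInter.2 fun j => hx j
    have hCcl : IsClosed C :=
      isClosed_iInter fun j => (hA.isOpen.isClosed_compl).preimage (hcont _)
    have hCinv : ∀ y ∈ C, ∀ k : ℕ, (ψ ^ (-(k : ℤ))) y ∈ C := by
      intro y hy k
      refine Set.mem_iInter.2 fun j => ?_
      have h2 := Set.mem_iInter.1 hy (j + k)
      simp only [Set.mem_preimage, Set.mem_compl_iff] at h2 ⊢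
      rw [happ, show -(j : ℤ) + -(k : ℤ) = -(((j + k : ℕ)) : ℤ) by push_cast; ring]
      exact h2
    have hCcover : C ⊆ ⋃ m : ℕ, (fun y => (ψ ^ ((m : ℤ) + 1)) y) ⁻¹' A := by
      intro y hy
      have : y ∈ ⋃ n : ℤ, (ψ ^ n) '' A := homni ▸ Set.mem_univ y
      obtain ⟨n, a, ha, hay⟩ := Set.mem_iUnion.1 this
      have hA' : (ψ ^ (-n)) y ∈ A := by
        rw [← hay, happ, neg_add_cancel, hzero]; exact ha
      rcases le_or_gt 0 n with hn | hn
      · have h3 := Set.mem_iInter.1 hy n.toNat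
        simp only [Set.mem_preimage, Set.mem_compl_iff] at h3
        rw [Int.toNat_of_nonneg hn] at h3
        exact absurd hA' h3
      · refine Set.mem_iUnion.2 ⟨(-n - 1).toNat, ?_⟩
        have : (((-n - 1).toNat : ℤ)) + 1 = -n := by
          rw [Int.toNat_of_nonneg (by omega)]; omega
        show (ψ ^ ((((-n - 1).toNat : ℤ)) + 1)) y ∈ A
        rw [this]; exact hA'
    obtain ⟨s, hs⟩ := (hCcl.isCompact).elim_finite_subcover _
      (fun m : ℕ => hA.isOpen.preimage (hcont _)) hCcover
    set K : ℕ := s.sup id + 1 with hK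
    have hyC : (ψ ^ (-(K : ℤ))) x ∈ C := hCinv x hxC K
    obtain ⟨m, hms, hmem⟩ := Set.mem_iUnion₂.1 (hs hyC)
    have hmK : m + 1 ≤ K := by
      have : m ≤ s.sup id := Finset.le_sup (f := id) hms
      omega
    have : (ψ ^ (-((K - (m + 1) : ℕ) : ℤ))) x ∈ A := by
      have h2 : (ψ ^ ((m : ℤ) + 1)) ((ψ ^ (-(K : ℤ))) x) ∈ A := hmem
      rw [happ] at h2
      have : -(((K - (m + 1) : ℕ)) : ℤ) = (m : ℤ) + 1 + -(K : ℤ) := by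
        push_cast [Nat.cast_sub hmK]
        ring
      rw [this]
      exact h2
    exact hx _ this
  -- Step 3 : tower decomposition
  have htower : ∀ x : X, ∃ j : ℕ, (ψ ^ (-(j : ℤ))) x ∈ A ∧
      (j : ℤ) < r ((ψ ^ (-(j : ℤ))) x) := by
    intro x
    set j := Nat.find (hback x) with hj
    have hjA : (ψ ^ (-(j : ℤ))) x ∈ A := Nat.find_spec (hback x)
    refine ⟨j, hjA, ?_⟩
    by_contra hcon
    push_neg at hcon
    set a := (ψ ^ (-(j : ℤ))) x with ha
    obtain ⟨hpos, hret, -⟩ := hrpos a hjA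
    -- then ψ^{r a} a = ψ^{-(j - r a)} x ∈ A with j - r a < j, contradicting minimality
    have hi : (r a).toNat ≤ j := by omega
    have hlt : j - (r a).toNat < j := by omega
    have : (ψ ^ (-((j - (r a).toNat : ℕ) : ℤ))) x ∈ A := by
      have h2 : (ψ ^ (r a)) ((ψ ^ (-(j : ℤ))) x) ∈ A := hret
      rw [happ] at h2
      have he : -(((j - (r a).toNat : ℕ)) : ℤ) = r a + -(j : ℤ) := by
        push_cast [Nat.cast_sub hi]
        omega
      rw [he]
      exact h2
    exact Nat.find_min (hback x) hlt this
  -- Step 4 : behaviour of φ on a tower column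
  have hstep_down : ∀ a ∈ A, ∀ j : ℕ, 0 < j → (j : ℤ) < r a →
      φ ((ψ ^ (j : ℤ)) a) = (ψ ^ ((j : ℤ) - 1)) a := by
    intro a ha j hj hjr
    have hnot : (ψ ^ (j : ℤ)) a ∉ A := (hrpos a ha).2.2 _ (by exact_mod_cast hj) hjr
    have hr' : r ((ψ ^ (j : ℤ)) a) = 0 := hr0 _ hnot
    simp only [hφ, hr', zero_sub]
    rw [happ, show (-1 : ℤ) + (j : ℤ) = (j : ℤ) - 1 by ring]
  -- L1 : going down the tower
  have L1 : ∀ a ∈ A, ∀ j : ℕ, (j : ℤ) < r a → ∀ i : ℕ, i ≤ j →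
      φ^[i] ((ψ ^ (j : ℤ)) a) = (ψ ^ ((j : ℤ) - i)) a := by
    intro a ha j hjr i
    induction i generalizing j with
    | zero => intro _; simp
    | succ i ih =>
      intro hij
      have h1 : ((j - 1 : ℕ) : ℤ) = (j : ℤ) - 1 := by omega
      have h2 := ih (j - 1) (by omega) (by omega)
      rw [h1] at h2
      rw [Function.iterate_succ_apply, hstep_down a ha j (by omega) hjr, h2,
        show (j : ℤ) - 1 - (i : ℤ) = (j : ℤ) - ((i + 1 : ℕ) : ℤ) by push_cast; ring]
  -- L2 : φ^[h] fixes every point of a tower column of height h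
  have L2 : ∀ a ∈ A, ∀ j : ℕ, (j : ℤ) < r a →
      φ^[(r a).toNat] ((ψ ^ (j : ℤ)) a) = (ψ ^ (j : ℤ)) a := by
    intro a ha j hjr
    obtain ⟨hpos, -, -⟩ := hrpos a ha
    set h : ℕ := (r a).toNat with hh
    have hh1 : 1 ≤ h := by omega
    have hjh : j < h := by omega
    have hsplit : h = (h - 1 - j) + 1 + j := by omega
    rw [hsplit, Function.iterate_add_apply, Function.iterate_add_apply]
    rw [L1 a ha j hjr j le_rfl]
    have hj0 : (ψ ^ ((j : ℤ) - j)) a = a := by rw [sub_self, hzero]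
    rw [hj0]
    have hbase : φ^[1] a = (ψ ^ ((r a) - 1)) a := by
      simp [hφ]
    rw [hbase]
    have he : r a - 1 = ((h - 1 : ℕ) : ℤ) := by omega
    rw [he, L1 a ha (h - 1) (by omega) (h - 1 - j) (by omega),
      show ((h - 1 : ℕ) : ℤ) - ((h - 1 - j : ℕ) : ℤ) = (j : ℤ) by omega]
  -- Step 6 : conclusion with n = M!
  refine ⟨M.factorial, M.factorial_pos, ?_⟩
  intro x
  obtain ⟨j, hjA, hjr⟩ := htower x
  set a := (ψ ^ (-(j : ℤ))) x with ha
  have hxa : (ψ ^ (j : ℤ)) a = x := by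
    rw [ha, happ, add_neg_cancel, hzero]
  obtain ⟨hpos, -, -⟩ := hrpos a hjA
  have hbound : r a ≤ (M : ℤ) := hMr a hjA
  set h : ℕ := (r a).toNat with hh
  have hdvd : h ∣ M.factorial := Nat.dvd_factorial (by omega) (by omega)
  obtain ⟨c, hc⟩ := hdvd
  show φ^[M.factorial] x = x
  rw [hc, Function.iterate_mul]
  have hfix : φ^[h] x = x := by rw [← hxa]; exact L2 a hjA j hjr
  exact Function.iterate_fixed hfix c
end

section
/- Let f be a homeomorphism of a compact totally separated space X and n ≥ 1 an integer such that f^i is fixed-point-free for all 1 ≤ i ≤ n−1. Then there exists a clopen set U such that the sets f^i(U) for 0 ≤ i ≤ n−1 are pairwise disjoint and ⋃_{i∈ℤ} f^i(U) = X. In particular, if fⁿ = id and f generates a free action of ℤ/nℤ, the sets f^i(U), 0 ≤ i ≤ n−1, partition X. -/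
variable {X : Type*} [TopologicalSpace X]

namespace Statement6Aux

lemma coe_zpow_add (f : X ≃ₜ X) (a b : ℤ) : ⇑(f ^ (a + b)) = ⇑(f ^ a) ∘ ⇑(f ^ b) := by
  rw [zpow_add]; rfl

lemma zpow_image_image (f : X ≃ₜ X) (a b : ℤ) (U : Set X) :
    (f ^ a) '' ((f ^ b) '' U) = (f ^ (a + b)) '' U := by
  rw [coe_zpow_add, Set.image_comp]

lemma zpow_zero_image (f : X ≃ₜ X) (U : Set X) : (f ^ (0 : ℤ)) '' U = U := by
  rw [zpow_zero]
  exact Set.image_id U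

lemma isClopen_zpow_image (f : X ≃ₜ X) (k : ℤ) {U : Set X} (h : IsClopen U) :
    IsClopen ((f ^ k) '' U) := by
  rw [Set.image_eq_preimage_of_inverse (f ^ k).symm_apply_apply (f ^ k).apply_symm_apply]
  exact h.preimage (f ^ k).symm.continuous

lemma disjoint_shift (f : X ≃ₜ X) (a d : ℤ) {U V : Set X}
    (h : Disjoint U ((f ^ d) '' V)) :
    Disjoint ((f ^ a) '' U) ((f ^ (a + d)) '' V) := by
  rw [← zpow_image_image]
  exact (Set.disjoint_image_iff (f ^ a).injective).mpr h

lemma disjoint_neg (f : X ≃ₜ X) (d : ℤ) {U : Set X}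
    (h : Disjoint U ((f ^ d) '' U)) : Disjoint U ((f ^ (-d)) '' U) := by
  have h2 := disjoint_shift f (-d) d h
  rw [neg_add_cancel, zpow_zero_image] at h2
  exact h2.symm

/-- Key tower construction lemma. -/
lemma tower (f : X ≃ₜ X) (n : ℕ) (hn : 1 ≤ n) {ι : Type*} (V : ι → Set X)
    (hV : ∀ x, IsClopen (V x) ∧
      ∀ d : ℤ, d ≠ 0 → |d| < (n : ℤ) → Disjoint (V x) ((f ^ d) '' (V x)))
    (s : Finset ι) :
    ∃ U : Set X, IsClopen U ∧
      (∀ d : ℤ, d ≠ 0 → |d| < (n : ℤ) → Disjoint U ((f ^ d) '' U)) ∧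
      ∀ x ∈ s, V x ⊆ ⋃ d ∈ Finset.Icc (1 - (n : ℤ)) ((n : ℤ) - 1), (f ^ d) '' U := by
  classical
  induction s using Finset.induction_on with
  | empty =>
      exact ⟨∅, isClopen_empty, fun d _ _ => by simp, fun x hx => absurd hx (by simp)⟩
  | @insert a s ha ih =>
      obtain ⟨U, hUc, hUd, hUcov⟩ := ih
      set T : Set X := ⋃ d ∈ Finset.Icc (1 - (n : ℤ)) ((n : ℤ) - 1), (f ^ d) '' U with hT
      have hTc : IsClopen T :=
        isClopen_biUnion_finset fun d _ => isClopen_zpow_image f d hUc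
      have hsubT : ∀ d : ℤ, d ≠ 0 → |d| < (n : ℤ) → (f ^ d) '' U ⊆ T := by
        intro d _ hdn y hy
        have hd' : d ∈ Finset.Icc (1 - (n : ℤ)) ((n : ℤ) - 1) := by
          rw [Finset.mem_Icc]; rw [abs_lt] at hdn; omega
        exact Set.mem_biUnion hd' hy
      refine ⟨U ∪ (V a \ T), hUc.union (((hV a).1).diff hTc), ?_, ?_⟩
      · intro d hd hdn
        rw [Set.image_union, Set.disjoint_union_left, Set.disjoint_union_right,
          Set.disjoint_union_right]
        have hneg : |(-d)| < (n : ℤ) := by rwa [abs_neg]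
        refine ⟨⟨hUd d hd hdn, ?_⟩, ?_, ?_⟩
        · -- Disjoint U ((f^d) '' (V a \ T))
          have h1 : Disjoint ((f ^ (-d)) '' U) (V a \ T) :=
            Set.disjoint_right.mpr fun y hy hyU =>
              hy.2 (hsubT (-d) (neg_ne_zero.mpr hd) hneg hyU)
          have h2 := disjoint_shift f d (-d) h1.symm
          rw [add_neg_cancel, zpow_zero_image] at h2
          exact h2.symm
        · -- Disjoint (V a \ T) ((f^d) '' U)
          exact Set.disjoint_left.mpr fun y hy hyU => hy.2 (hsubT d hd hdn hyU)
        · exact ((hV a).2 d hd hdn).mono Set.diff_subset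
            (Set.image_mono Set.diff_subset)
      · intro x hx y hy
        have hmono : T ⊆ ⋃ d ∈ Finset.Icc (1 - (n : ℤ)) ((n : ℤ) - 1),
            (f ^ d) '' (U ∪ (V a \ T)) := by
          refine Set.iUnion₂_mono fun d _ => Set.image_mono Set.subset_union_left
        rcases Finset.mem_insert.mp hx with rfl | hxs
        · by_cases hyT : y ∈ T
          · exact hmono hyT
          · have h0 : (0 : ℤ) ∈ Finset.Icc (1 - (n : ℤ)) ((n : ℤ) - 1) := by
              rw [Finset.mem_Icc]; omega
            refine Set.mem_biUnion h0 ?_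
            rw [zpow_zero_image]
            exact Or.inr ⟨hy, hyT⟩
        · exact hmono (hUcov x hxs hy)

end Statement6Aux

/-- if `f^i` is fixed-point-free for `1 ≤ i ≤ n-1` on a compact totally
separated space, there is a clopen `U` with `f^i(U)`, `0 ≤ i ≤ n-1`, pairwise disjoint
and `⋃_{i∈ℤ} f^i(U) = X`; if moreover `fⁿ = 1`, these sets partition `X`. -/
theorem statement6 [CompactSpace X] [TotallySeparatedSpace X] (f : X ≃ₜ X)
    (n : ℕ) (hn : 1 ≤ n)
    (hfree : ∀ i : ℕ, 1 ≤ i → i ≤ n - 1 → ∀ x : X, (f ^ i) x ≠ x) :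
    ∃ U : Set X, IsClopen U ∧
      (∀ i j : ℕ, i < n → j < n → i ≠ j → Disjoint ((f ^ i) '' U) ((f ^ j) '' U)) ∧
      (⋃ k : ℤ, (f ^ k) '' U) = Set.univ ∧
      ((f ^ n = 1) → ∀ x : X, ∃! i : Fin n, x ∈ (f ^ (i : ℕ)) '' U) := by
  classical
  have step1 : ∀ x : X, ∃ V : Set X, x ∈ V ∧ IsClopen V ∧
      ∀ d : ℤ, d ≠ 0 → |d| < (n : ℤ) → Disjoint V ((f ^ d) '' V) := by
    intro x
    have hA : ∀ i : ℕ, ∃ A : Set X, IsClopen A ∧ x ∈ A ∧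
        (1 ≤ i → i ≤ n - 1 → (f ^ i) x ∉ A) := by
      intro i
      by_cases hi : 1 ≤ i ∧ i ≤ n - 1
      · obtain ⟨A, hAc, hxA, hfA⟩ :=
          exists_isClopen_of_totally_separated (Ne.symm (hfree i hi.1 hi.2 x))
        exact ⟨A, hAc, hxA, fun _ _ => hfA⟩
      · exact ⟨Set.univ, isClopen_univ, trivial, fun h1 h2 => absurd ⟨h1, h2⟩ hi⟩
    choose A hAc hxA hfA using hA
    set W : ℕ → Set X := fun i => A i ∩ (f ^ i) ⁻¹' (A i)ᶜ with hW
    refine ⟨⋂ i ∈ Finset.Icc 1 (n - 1), W i, ?_, ?_, ?_⟩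
    · refine Set.mem_biInter fun i hi => ?_
      replace hi : i ∈ Finset.Icc 1 (n - 1) := hi
      rw [Finset.mem_Icc] at hi
      exact ⟨hxA i, hfA i hi.1 hi.2⟩
    · exact isClopen_biInter_finset fun i _ =>
        ((hAc i).inter (((hAc i).compl).preimage (f ^ i).continuous))
    · have hpos : ∀ i : ℕ, 1 ≤ i → i ≤ n - 1 →
          Disjoint (⋂ j ∈ Finset.Icc 1 (n - 1), W j)
            ((f ^ (i : ℤ)) '' ⋂ j ∈ Finset.Icc 1 (n - 1), W j) := by
        intro i h1 h2
        have hmem : i ∈ Finset.Icc 1 (n - 1) := Finset.mem_Icc.mpr ⟨h1, h2⟩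
        have hsub : (⋂ j ∈ Finset.Icc 1 (n - 1), W j) ⊆ W i :=
          Set.biInter_subset_of_mem hmem
        refine Set.disjoint_left.mpr fun y hy hy2 => ?_
        obtain ⟨z, hz, rfl⟩ := hy2
        have hzW := hsub hz
        have hyW := hsub hy
        have hcast : (f ^ (i : ℤ)) z = (f ^ i) z := by rw [zpow_natCast]
        exact hzW.2 (hcast ▸ hyW.1)
      intro d hd hdn
      rw [abs_lt] at hdn
      rcases lt_or_gt_of_ne hd with hneg | hposd
      · have h := hpos (-d).toNat (by omega) (by omega)
        rw [Int.toNat_of_nonneg (by omega)] at h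
        have h2 := Statement6Aux.disjoint_neg f (-d) h
        rwa [neg_neg] at h2
      · have h := hpos d.toNat (by omega) (by omega)
        rwa [Int.toNat_of_nonneg (by omega)] at h
  choose V hxV hVc hVd using step1
  have hcov : Set.univ ⊆ ⋃ x, V x := fun y _ => Set.mem_iUnion.mpr ⟨y, hxV y⟩
  obtain ⟨t, ht⟩ := IsCompact.elim_finite_subcover isCompact_univ V
    (fun x => (hVc x).isOpen) hcov
  obtain ⟨U, hUc, hUd, hUcov⟩ :=
    Statement6Aux.tower f n hn V (fun x => ⟨hVc x, hVd x⟩) t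
  have hdisj : ∀ i j : ℕ, i < n → j < n → i ≠ j →
      Disjoint ((f ^ i) '' U) ((f ^ j) '' U) := by
    intro i j hi hj hij
    have hd : ((j : ℤ) - i) ≠ 0 := by omega
    have hdn : |(j : ℤ) - i| < (n : ℤ) := by rw [abs_lt]; omega
    have h := Statement6Aux.disjoint_shift f (i : ℤ) ((j : ℤ) - i) (hUd _ hd hdn)
    rw [show (i : ℤ) + ((j : ℤ) - i) = (j : ℤ) from by ring] at h
    rwa [zpow_natCast, zpow_natCast] at h
  have huniv : (⋃ k : ℤ, (f ^ k) '' U) = Set.univ := by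
    apply Set.eq_univ_of_univ_subset
    intro y _
    have hy := ht (Set.mem_univ y)
    rw [Set.mem_iUnion₂] at hy
    obtain ⟨x, hxt, hyx⟩ := hy
    have h2 := hUcov x hxt hyx
    rw [Set.mem_iUnion₂] at h2
    obtain ⟨d, -, hyd⟩ := h2
    exact Set.mem_iUnion.mpr ⟨d, hyd⟩
  refine ⟨U, hUc, hdisj, huniv, ?_⟩
  intro hfn x
  have hx : x ∈ ⋃ k : ℤ, (f ^ k) '' U := huniv ▸ Set.mem_univ x
  obtain ⟨k, hk⟩ := Set.mem_iUnion.mp hx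
  have hr0 : 0 ≤ k % (n : ℤ) := Int.emod_nonneg k (by omega)
  have hrn : k % (n : ℤ) < (n : ℤ) := Int.emod_lt_of_pos k (by omega)
  have hfk : f ^ k = f ^ (k % (n : ℤ)) := by
    conv_lhs => rw [← Int.mul_ediv_add_emod k (n : ℤ)]
    rw [zpow_add, zpow_mul, zpow_natCast, hfn, one_zpow, one_mul]
  set i : Fin n := ⟨(k % (n : ℤ)).toNat, by omega⟩ with hi
  have hcasti : ((i : ℕ) : ℤ) = k % (n : ℤ) := Int.toNat_of_nonneg hr0
  have hfi : f ^ (i : ℕ) = f ^ (k % (n : ℤ)) := by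
    rw [← zpow_natCast, hcasti]
  refine ⟨i, ?_, ?_⟩
  · show x ∈ (f ^ (i : ℕ)) '' U
    rw [hfi, ← hfk]; exact hk
  · intro j hj
    by_contra hne
    have hd := hdisj (j : ℕ) (i : ℕ) j.2 i.2 (fun hc => hne (Fin.ext hc))
    exact Set.disjoint_left.mp hd hj (by rw [hfi, ← hfk]; exact hk)
end

section
/- Any subshift (X, φ) over ℤ with no orbit of cardinality ≤ d is isomorphic (ℤ-equivariantly homeomorphic) to a d-proper subshift over some finite alphabet, i.e., one where for all w in the subshift and all m, n with 0 < |m−n| ≤ d, one has w(m) ≠ w(n). -/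
/-- a subshift over `ℤ` with no orbit of cardinality `≤ d` is
`ℤ`-equivariantly homeomorphic to a `d`-proper subshift over some finite alphabet. -/
theorem statement10 {A : Type*} [Fintype A] [TopologicalSpace A] [DiscreteTopology A]
    (d : ℕ) (S : Set (ℤ → A)) (hcl : IsClosed S)
    (hinv : ∀ w ∈ S, (fun n => w (n - 1)) ∈ S ∧ (fun n => w (n + 1)) ∈ S)
    (horb : ∀ w ∈ S, ∀ t : Finset (ℤ → A),
      (Set.range fun k : ℤ => fun n => w (n - k)) ⊆ ↑t → d < t.card) :
    ∃ (m : ℕ) (T : Set (ℤ → Fin m)), IsClosed T ∧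
      (∀ v ∈ T, (fun n => v (n - 1)) ∈ T ∧ (fun n => v (n + 1)) ∈ T) ∧
      (∀ v ∈ T, ∀ p q : ℤ, p ≠ q → |p - q| ≤ (d : ℤ) → v p ≠ v q) ∧
      ∃ h : S ≃ₜ T, ∀ w₁ w₂ : S, (∀ n : ℤ, (w₂ : ℤ → A) n = (w₁ : ℤ → A) (n - 1)) →
        ∀ n : ℤ, (h w₂ : ℤ → Fin m) n = (h w₁ : ℤ → Fin m) (n - 1) := by
  classical
  -- arbitrary shifts stay in S
  have hshift : ∀ t : ℤ, ∀ w ∈ S, (fun n => w (n + t)) ∈ S := by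
    intro t
    induction t using Int.induction_on with
    | zero => intro w hw; simpa using hw
    | succ k ih =>
      intro w hw
      have h2 := (hinv _ (ih w hw)).2
      have he : (fun n : ℤ => w (n + ((k : ℤ) + 1))) =
          (fun n : ℤ => (fun m : ℤ => w (m + k)) (n + 1)) := by
        funext n; congr 1; ring
      rw [he]; exact h2
    | pred k ih =>
      intro w hw
      have h2 := (hinv _ (ih w hw)).1
      have he : (fun n : ℤ => w (n + (-(k : ℤ) - 1))) =
          (fun n : ℤ => (fun m : ℤ => w (m + (-(k:ℤ)))) (n - 1)) := by
        funext n; congr 1; ring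
      rw [he]; exact h2
  -- every element of S is aperiodic for periods 1..d
  have hper : ∀ w ∈ S, ∀ k : ℕ, 1 ≤ k → k ≤ d → ∃ i : ℤ, w i ≠ w (i + k) := by
    intro w hw k hk1 hkd
    by_contra h
    push_neg at h
    have hperiodic : Function.Periodic w (k : ℤ) := fun i => (h i).symm
    set t : Finset (ℤ → A) := (Finset.range k).image (fun j : ℕ => fun n : ℤ => w (n - (j:ℤ))) with ht
    have hsub : (Set.range fun m : ℤ => fun n => w (n - m)) ⊆ ↑t := by
      rintro _ ⟨m, rfl⟩
      have hk0 : (0:ℤ) < (k:ℤ) := by exact_mod_cast hk1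
      have hmod : ((m % (k:ℤ)).toNat : ℤ) = m % (k:ℤ) :=
        Int.toNat_of_nonneg (Int.emod_nonneg m (by omega))
      have hlt : (m % (k:ℤ)).toNat < k := by
        have := Int.emod_lt_of_pos m hk0
        omega
      refine Finset.mem_coe.mpr (Finset.mem_image.mpr ⟨(m % (k:ℤ)).toNat,
        Finset.mem_range.mpr hlt, ?_⟩)
      funext n
      show w (n - ((m % (k:ℤ)).toNat : ℤ)) = w (n - m)
      have harg : n - ((m % (k:ℤ)).toNat : ℤ) = (n - m) - (-(m / (k:ℤ))) * (k:ℤ) := by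
        have hdm := Int.mul_ediv_add_emod m (k:ℤ)
        rw [hmod]; ring_nf; linarith [hdm]
      rw [harg]
      simpa using hperiodic.sub_int_mul_eq (x := n - m) (-(m / (k:ℤ)))
    have hcard := horb w hw t hsub
    have : t.card ≤ k := le_trans Finset.card_image_le (by simp [Finset.card_range])
    omega
  -- compactness: uniform window per period k
  have hA : CompactSpace (ℤ → A) := by infer_instance
  have hNk : ∀ k : ℕ, ∃ N : ℕ, (1 ≤ k ∧ k ≤ d) →
      ∀ w ∈ S, ∃ i : ℤ, |i| ≤ (N : ℤ) ∧ w i ≠ w (i + k) := by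
    intro k
    by_cases hk : 1 ≤ k ∧ k ≤ d
    · have hSc : IsCompact S := hcl.isCompact
      set U : ℕ → Set (ℤ → A) :=
        fun N => {w | ∃ i : ℤ, |i| ≤ (N:ℤ) ∧ w i ≠ w (i + k)} with hU
      have hUopen : ∀ N, IsOpen (U N) := by
        intro N
        have hEq : U N = ⋃ i ∈ Finset.Icc (-(N:ℤ)) (N:ℤ), {w : ℤ → A | w i ≠ w (i + k)} := by
          ext w
          simp only [hU, Set.mem_setOf_eq, Set.mem_iUnion, Finset.mem_Icc, abs_le,
            exists_prop]
        rw [hEq]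
        refine isOpen_biUnion fun i _ => ?_
        exact (isClosed_eq (continuous_apply i) (continuous_apply (i + (k:ℤ)))).isOpen_compl
      have hcover : S ⊆ ⋃ N : ℕ, U N := by
        intro w hw
        obtain ⟨i, hi⟩ := hper w hw k hk.1 hk.2
        exact Set.mem_iUnion.mpr ⟨i.natAbs, ⟨i, le_of_eq (Int.abs_eq_natAbs i), hi⟩⟩
      obtain ⟨t, hts⟩ := hSc.elim_finite_subcover U hUopen hcover
      refine ⟨t.sup id, fun _ w hw => ?_⟩
      obtain ⟨N, hNt, hwN⟩ := Set.mem_iUnion₂.mp (hts hw)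
      obtain ⟨i, hi, hne⟩ := hwN
      refine ⟨i, le_trans hi ?_, hne⟩
      exact_mod_cast Finset.le_sup (f := id) hNt
    · exact ⟨0, fun h => absurd h hk⟩
  choose f hf using hNk
  set N : ℕ := (Finset.Icc 1 d).sup f with hNdef
  have hsep : ∀ k : ℕ, 1 ≤ k → k ≤ d → ∀ w ∈ S, ∃ i : ℤ, |i| ≤ (N:ℤ) ∧ w i ≠ w (i + k) := by
    intro k h1 h2 w hw
    obtain ⟨i, hi, hne⟩ := hf k ⟨h1, h2⟩ w hw
    refine ⟨i, le_trans hi ?_, hne⟩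
    exact_mod_cast Finset.le_sup (f := f) (Finset.mem_Icc.mpr ⟨h1, h2⟩)
  -- the higher-block code
  set L : ℕ := 2 * N + 1 with hL
  set m : ℕ := Fintype.card (Fin L → A) with hm
  set e : (Fin L → A) ≃ Fin m := Fintype.equivFin _ with he
  set block : (ℤ → A) → ℤ → Fin L → A :=
    fun w n j => w (n + (j : ℕ) - N) with hblockdef
  set Φ : (ℤ → A) → ℤ → Fin m := fun w n => e (block w n) with hΦ
  -- key separation
  have hblockne : ∀ w ∈ S, ∀ p q : ℤ, p < q → q - p ≤ (d:ℤ) → block w p ≠ block w q := by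
    intro w hw p q hpq hqd
    set k : ℕ := (q - p).toNat with hk
    have hk1 : 1 ≤ k := by omega
    have hkd : k ≤ d := by omega
    have hkq : (k : ℤ) = q - p := by omega
    have hw' : (fun n => w (n + p)) ∈ S := hshift p w hw
    obtain ⟨i, hi, hne⟩ := hsep k hk1 hkd _ hw'
    have hiN : -(N:ℤ) ≤ i ∧ i ≤ (N:ℤ) := abs_le.mp hi
    have hjlt : (i + N).toNat < L := by omega
    intro heq
    apply hne
    have hj := congrFun heq ⟨(i + N).toNat, hjlt⟩
    simp only [hblockdef] at hj
    have h1 : p + (((i + (N:ℤ)).toNat : ℕ) : ℤ) - N = i + p := by omega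
    have h2 : q + (((i + (N:ℤ)).toNat : ℕ) : ℤ) - N = i + k + p := by omega
    rw [h1, h2] at hj
    simpa using hj
  refine ⟨m, Φ '' S, ?_, ?_, ?_, ?_⟩
  · -- closed
    have hΦcont : Continuous Φ := by
      refine continuous_pi fun n => ?_
      have h1 : Continuous (fun w : ℤ → A => block w n) :=
        continuous_pi fun j => continuous_apply _
      exact (continuous_of_discreteTopology (f := (e : (Fin L → A) → Fin m))).comp h1
    exact (hcl.isCompact.image hΦcont).isClosed
  · -- shift invariance
    rintro _ ⟨w, hw, rfl⟩
    constructor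
    · refine ⟨fun n => w (n - 1), (hinv w hw).1, ?_⟩
      funext n
      simp only [hΦ]
      congr 1
      funext j
      simp only [hblockdef]
      congr 1
      ring
    · refine ⟨fun n => w (n + 1), (hinv w hw).2, ?_⟩
      funext n
      simp only [hΦ]
      congr 1
      funext j
      simp only [hblockdef]
      congr 1
      ring
  · -- d-proper
    rintro _ ⟨w, hw, rfl⟩ p q hpq habs
    rcases lt_or_gt_of_ne hpq with h | h
    · intro hv
      exact hblockne w hw p q h (by rw [abs_sub_comm] at habs; rwa [abs_of_pos (by omega)] at habs)
        (e.injective hv)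
    · intro hv
      exact hblockne w hw q p h (by rwa [abs_of_pos (by omega)] at habs)
        (e.injective hv.symm)
  · -- homeomorphism
    have hΦcont : Continuous Φ := by
      refine continuous_pi fun n => ?_
      have h1 : Continuous (fun w : ℤ → A => block w n) :=
        continuous_pi fun j => continuous_apply _
      exact (continuous_of_discreteTopology (f := (e : (Fin L → A) → Fin m))).comp h1
    have hΦinj : Function.Injective Φ := by
      intro w u hwu
      funext n
      have hb : block w n = block u n := e.injective (congrFun hwu n)
      have hj := congrFun hb ⟨N, by omega⟩
      simp only [hblockdef] at hj
      have : n + ((N:ℕ) : ℤ) - N = n := by ring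
      rwa [this] at hj
    haveI : CompactSpace S := isCompact_iff_compactSpace.mp hcl.isCompact
    let F : S → (Φ '' S : Set (ℤ → Fin m)) := fun w => ⟨Φ w.1, ⟨w.1, w.2, rfl⟩⟩
    have hFbij : Function.Bijective F := by
      constructor
      · intro a b hab
        exact Subtype.ext (hΦinj (congrArg Subtype.val hab))
      · rintro ⟨v, w, hw, rfl⟩
        exact ⟨⟨w, hw⟩, rfl⟩
    have hFcont : Continuous F :=
      Continuous.subtype_mk (hΦcont.comp continuous_subtype_val) _
    refine ⟨Continuous.homeoOfEquivCompactToT2 (f := Equiv.ofBijective F hFbij) hFcont,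
      ?_⟩
    intro w₁ w₂ hrel n
    show Φ (w₂ : ℤ → A) n = Φ (w₁ : ℤ → A) (n - 1)
    simp only [hΦ]
    congr 1
    funext j
    simp only [hblockdef]
    rw [hrel]
    ring_nf
end

section
/- Let X be a nonempty subshift of finite type over ℤ that is irreducible. Then X is the intersection of a decreasing sequence of irreducible subshifts of finite type, each defined by forbidding all forbidden patterns of X of a fixed length n. -/
/-- The word `w` of length `k` occurs in `x` at position `p`. -/
def PatOccurs {A : Type*} (x : ℤ → A) (w : ℕ → A) (k : ℕ) (p : ℤ) : Prop :=
  ∀ i : ℕ, i < k → x (p + i) = w i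

/-- The word `w` of length `k` is an allowed pattern of `X`. -/
def PatAllowed {A : Type*} (X : Set (ℤ → A)) (w : ℕ → A) (k : ℕ) : Prop :=
  ∃ x ∈ X, ∃ p : ℤ, PatOccurs x w k p

/-- `X` is an irreducible subshift: any two allowed patterns can be seen as initial and
terminal segments of a single allowed pattern. -/
def SubshiftIrreducible {A : Type*} (X : Set (ℤ → A)) : Prop :=
  ∀ (k₁ : ℕ) (w₁ : ℕ → A) (k₂ : ℕ) (w₂ : ℕ → A),
    PatAllowed X w₁ k₁ → PatAllowed X w₂ k₂ →
    ∃ (m : ℕ) (u : ℕ → A), PatAllowed X u (k₁ + m + k₂) ∧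
      (∀ i : ℕ, i < k₁ → u i = w₁ i) ∧ (∀ i : ℕ, i < k₂ → u (k₁ + m + i) = w₂ i)

/-- `X` is defined by the set of forbidden words `F` (words with their lengths). -/
def DefinedByForbidden {A : Type*} (X : Set (ℤ → A)) (F : Set ((ℕ → A) × ℕ)) : Prop :=
  X = {x | ∀ w : (ℕ → A) × ℕ, w ∈ F → ∀ p : ℤ, ¬ PatOccurs x w.1 w.2 p}

/-- `X` is a subshift of finite type. -/
def IsSFT {A : Type*} (X : Set (ℤ → A)) : Prop :=
  ∃ F : Set ((ℕ → A) × ℕ), F.Finite ∧ DefinedByForbidden X F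

namespace S11

variable {A : Type*}

theorem patOccurs_congr {x : ℤ → A} {w w' : ℕ → A} {k : ℕ} {p : ℤ}
    (h : ∀ i < k, w i = w' i) (ho : PatOccurs x w k p) : PatOccurs x w' k p :=
  fun i hi => (ho i hi).trans (h i hi)

theorem patAllowed_congr {X : Set (ℤ → A)} {w w' : ℕ → A} {k : ℕ}
    (h : ∀ i < k, w i = w' i) (hw : PatAllowed X w k) : PatAllowed X w' k := by
  obtain ⟨x, hx, p, ho⟩ := hw
  exact ⟨x, hx, p, patOccurs_congr h ho⟩

theorem patAllowed_sub {X : Set (ℤ → A)} {w : ℕ → A} {k : ℕ} (hw : PatAllowed X w k)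
    (j l : ℕ) (hjl : j + l ≤ k) : PatAllowed X (fun i => w (j + i)) l := by
  obtain ⟨x, hx, p, ho⟩ := hw
  refine ⟨x, hx, p + j, fun i hi => ?_⟩
  have h1 : x (p + ((j + i : ℕ) : ℤ)) = w (j + i) := ho (j + i) (by omega)
  have h2 : p + (j : ℤ) + (i : ℤ) = p + ((j + i : ℕ) : ℤ) := by push_cast; ring
  rw [h2, h1]

def Xn (X : Set (ℤ → A)) (n : ℕ) : Set (ℤ → A) :=
  {x : ℤ → A | ∀ w : ℕ → A, ¬ PatAllowed X w n → ∀ p : ℤ, ¬ PatOccurs x w n p}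

theorem subset_Xn {X : Set (ℤ → A)} {n : ℕ} : X ⊆ Xn X n :=
  fun x hx w hw p hp => hw ⟨x, hx, p, hp⟩

theorem mem_Xn_window {X : Set (ℤ → A)} {n : ℕ} {x : ℤ → A} (hx : x ∈ Xn X n) (p : ℤ) :
    PatAllowed X (fun i => x (p + i)) n := by
  by_contra h
  exact hx _ h p (fun i _ => rfl)

theorem mem_Xn_window_le {X : Set (ℤ → A)} {n : ℕ} {x : ℤ → A} (hx : x ∈ Xn X n) (p : ℤ)
    {l : ℕ} (hl : l ≤ n) : PatAllowed X (fun i => x (p + i)) l := by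
  have h1 := patAllowed_sub (mem_Xn_window hx p) 0 l (by omega)
  exact patAllowed_congr (fun i hi => by norm_num) h1

def SubAdm (X : Set (ℤ → A)) (n : ℕ) (w : ℕ → A) (k : ℕ) : Prop :=
  ∀ s l : ℕ, s + l ≤ k → l ≤ n → PatAllowed X (fun i => w (s + i)) l

theorem allowed_Xn_subAdm {X : Set (ℤ → A)} {n : ℕ} {w : ℕ → A} {k : ℕ}
    (hw : PatAllowed (Xn X n) w k) : SubAdm X n w k := by
  obtain ⟨x, hx, p, ho⟩ := hw
  intro s l hsl hl
  refine patAllowed_congr (fun i hi => ?_) (mem_Xn_window_le hx (p + s) hl)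
  -- x (p + s + i) = w (s + i)
  have h1 : x (p + ((s + i : ℕ) : ℤ)) = w (s + i) := ho (s + i) (by omega)
  have h2 : p + (s : ℤ) + (i : ℤ) = p + ((s + i : ℕ) : ℤ) := by push_cast; ring
  rw [h2, h1]

def Adm (X : Set (ℤ → A)) (n : ℕ) (y : ℤ → A) (a b : ℤ) : Prop :=
  ∀ (s : ℤ) (l : ℕ), a ≤ s → s + l ≤ b → l ≤ n → PatAllowed X (fun i => y (s + i)) l


theorem ext_right {X : Set (ℤ → A)} {n : ℕ} {y : ℤ → A} {a b : ℤ} (hn : 1 ≤ n)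
    (hab : a ≤ b) (h : Adm X n y a b) :
    ∃ c, Adm X n (Function.update y b c) a (b + 1) := by
  set ℓ : ℕ := min (b - a).toNat (n - 1) with hℓ
  have hba : ((b - a).toNat : ℤ) = b - a := Int.toNat_of_nonneg (by omega)
  have hℓ' : (ℓ : ℤ) ≤ b - a ∧ ℓ ≤ n - 1 := by
    constructor
    · have : ℓ ≤ (b - a).toNat := by omega
      omega
    · omega
  have hv : PatAllowed X (fun i => y (b - ℓ + i)) ℓ :=
    h (b - ℓ) ℓ (by omega) (by omega) (by omega)
  obtain ⟨x, hx, p, ho⟩ := hv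
  refine ⟨x (p + ℓ), fun s l hs hsl hl => ?_⟩
  by_cases hcase : s + l ≤ b
  · refine patAllowed_congr (fun i hi => ?_) (h s l hs hcase hl)
    rw [Function.update_of_ne (by omega)]
  · -- s + l = b + 1
    have hsb : b - (ℓ : ℤ) ≤ s := by omega
    refine ⟨x, hx, p + (s - (b - ℓ)), fun i hi => ?_⟩
    show x (p + (s - (b - (ℓ:ℤ))) + (i:ℤ)) = Function.update y b (x (p + (ℓ:ℤ))) (s + (i:ℤ))
    by_cases hib : s + (i : ℤ) = b
    · have harg : p + (s - (b - ℓ)) + (i : ℤ) = p + ℓ := by omega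
      rw [harg, hib, Function.update_self]
    · rw [Function.update_of_ne hib]
      set j : ℕ := (s + i - (b - ℓ)).toNat with hj
      have hj' : (j : ℤ) = s + i - (b - ℓ) := Int.toNat_of_nonneg (by omega)
      have hjℓ : j < ℓ := by omega
      have hx1 : x (p + (j : ℤ)) = y (b - ℓ + j) := ho j hjℓ
      have e1 : p + (s - (b - ℓ)) + (i : ℤ) = p + (j : ℤ) := by omega
      have e2 : b - (ℓ : ℤ) + (j : ℤ) = s + i := by omega
      rw [e1, hx1, e2]

theorem ext_left {X : Set (ℤ → A)} {n : ℕ} {y : ℤ → A} {a b : ℤ} (hn : 1 ≤ n)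
    (hab : a ≤ b) (h : Adm X n y a b) :
    ∃ c, Adm X n (Function.update y (a - 1) c) (a - 1) b := by
  set ℓ : ℕ := min (b - a).toNat (n - 1) with hℓ
  have hba : ((b - a).toNat : ℤ) = b - a := Int.toNat_of_nonneg (by omega)
  have hℓ' : (ℓ : ℤ) ≤ b - a ∧ ℓ ≤ n - 1 := by
    constructor
    · have : ℓ ≤ (b - a).toNat := by omega
      omega
    · omega
  have hv : PatAllowed X (fun i => y (a + i)) ℓ := h a ℓ le_rfl (by omega) (by omega)
  obtain ⟨x, hx, p, ho⟩ := hv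
  refine ⟨x (p - 1), fun s l hs hsl hl => ?_⟩
  by_cases hcase : a ≤ s
  · refine patAllowed_congr (fun i hi => ?_) (h s l hcase hsl hl)
    rw [Function.update_of_ne (by omega)]
  · -- s = a - 1
    have hsa : s = a - 1 := by omega
    refine ⟨x, hx, p - 1, fun i hi => ?_⟩
    show x (p - 1 + (i:ℤ)) = Function.update y (a - 1) (x (p - 1)) (s + (i:ℤ))
    by_cases hi0 : i = 0
    · subst hi0
      have harg : p - 1 + ((0 : ℕ) : ℤ) = p - 1 := by norm_num
      have harg2 : s + ((0 : ℕ) : ℤ) = a - 1 := by omega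
      rw [harg, harg2, Function.update_self]
    · rw [Function.update_of_ne (by omega)]
      set j : ℕ := i - 1 with hj
      have hjc : (j : ℤ) = (i : ℤ) - 1 := by omega
      have hjℓ : j < ℓ := by omega
      have hx1 : x (p + (j : ℤ)) = y (a + j) := ho j hjℓ
      have e1 : p - 1 + (i : ℤ) = p + (j : ℤ) := by omega
      have e2 : a + (j : ℤ) = s + i := by omega
      rw [e1, hx1, e2]

theorem ext_both {X : Set (ℤ → A)} {n : ℕ} {y : ℤ → A} {a b : ℤ} (hn : 1 ≤ n)
    (hab : a ≤ b) (h : Adm X n y a b) :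
    ∃ y', (∀ t, a ≤ t → t < b → y' t = y t) ∧ Adm X n y' (a - 1) (b + 1) := by
  obtain ⟨c, hc⟩ := ext_right hn hab h
  obtain ⟨c', hc'⟩ := ext_left hn (show a ≤ b + 1 by omega) hc
  refine ⟨_, fun t ht1 ht2 => ?_, hc'⟩
  rw [Function.update_of_ne (by omega), Function.update_of_ne (by omega)]


theorem exists_mem_Xn {X : Set (ℤ → A)} {n : ℕ} (hn : 1 ≤ n) {y : ℤ → A} {a b : ℤ}
    (hab : a ≤ b) (h : Adm X n y a b) :
    ∃ x ∈ Xn X n, ∀ t, a ≤ t → t < b → x t = y t := by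
  have step : ∀ (j : ℕ) (z : ℤ → A), Adm X n z (a - j) (b + j) →
      ∃ z', (∀ t, a - j ≤ t → t < b + j → z' t = z t) ∧
        Adm X n z' (a - (j + 1 : ℕ)) (b + (j + 1 : ℕ)) := by
    intro j z hz
    obtain ⟨z', h1, h2⟩ := ext_both hn (by omega) hz
    refine ⟨z', h1, ?_⟩
    have e1 : a - ((j + 1 : ℕ) : ℤ) = a - j - 1 := by push_cast; ring
    have e2 : b + ((j + 1 : ℕ) : ℤ) = b + j + 1 := by push_cast; ring
    rw [e1, e2]; exact h2
  choose g hg1 hg2 using step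
  let f : ∀ j : ℕ, {z : ℤ → A // Adm X n z (a - j) (b + j)} :=
    fun j => Nat.rec ⟨y, by norm_num; exact h⟩
      (fun j ih => ⟨g j ih.1 ih.2, hg2 j ih.1 ih.2⟩) j
  have hstep : ∀ (j : ℕ) (t : ℤ), a - j ≤ t → t < b + j → (f (j + 1)).1 t = (f j).1 t :=
    fun j t h1 h2 => hg1 j (f j).1 (f j).2 t h1 h2
  have hagree : ∀ (j j' : ℕ), j ≤ j' → ∀ t : ℤ, a - j ≤ t → t < b + j →
      (f j').1 t = (f j).1 t := by
    intro j j' hjj'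
    induction j' with
    | zero =>
      intro t h1 h2
      have hj0 : j = 0 := by omega
      subst hj0; rfl
    | succ j' ih =>
      intro t h1 h2
      rcases Nat.lt_or_ge j (j' + 1) with hlt | hge
      · have hj' : j ≤ j' := by omega
        rw [hstep j' t (by push_cast at h1 ⊢; omega) (by push_cast at h2 ⊢; omega)]
        exact ih hj' t h1 h2
      · have : j = j' + 1 := by omega
        subst this; rfl
  set J : ℤ → ℕ := fun t => (max (max (a - t) (t - b + 1)) 0).toNat with hJ
  have hJ1 : ∀ t : ℤ, a - (J t : ℤ) ≤ t ∧ t < b + (J t : ℤ) := by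
    intro t; simp only [hJ]; omega
  have hJle : ∀ (t : ℤ) (j : ℕ), a - (j : ℤ) ≤ t → t < b + j → J t ≤ j := by
    intro t j h1 h2; simp only [hJ]; omega
  refine ⟨fun t => (f (J t)).1 t, ?_, ?_⟩
  · intro w hw p hp
    apply hw
    set j : ℕ := (max (max (a - p) (p + n - b)) 0).toNat with hj
    have hj1 : a - (j : ℤ) ≤ p ∧ p + (n : ℤ) ≤ b + j := by simp only [hj]; omega
    have hA := (f j).2 p n hj1.1 hj1.2 le_rfl
    refine patAllowed_congr (fun i hi => ?_) hA
    -- (f j).1 (p + i) = w i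
    have hb1 : a - (j : ℤ) ≤ p + i := by omega
    have hb2 : p + (i : ℤ) < b + j := by omega
    have := hagree (J (p + i)) j (hJle _ _ hb1 hb2) (p + i) (hJ1 _).1 (hJ1 _).2
    exact this.trans (hp i hi)
  · intro t ht1 ht2
    have hb1 : a - ((0 : ℕ) : ℤ) ≤ t := by norm_num; omega
    have hb2 : t < b + ((0 : ℕ) : ℤ) := by norm_num; omega
    exact hagree 0 (J t) (Nat.zero_le _) t hb1 hb2


theorem subAdm_allowed_Xn {X : Set (ℤ → A)} {n : ℕ} (hn : 1 ≤ n) {w : ℕ → A} {k : ℕ}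
    (h : SubAdm X n w k) : PatAllowed (Xn X n) w k := by
  have hAdm : Adm X n (fun t => w t.toNat) 0 k := by
    intro s l hs hsl hl
    have h1 := h s.toNat l (by omega) hl
    refine patAllowed_congr (fun i hi => ?_) h1
    show w (s.toNat + i) = w (s + (i : ℤ)).toNat
    congr 1
    omega
  obtain ⟨x, hx, hxy⟩ := exists_mem_Xn hn (by exact_mod_cast Nat.zero_le k) hAdm
  refine ⟨x, hx, 0, fun i hi => ?_⟩
  have h2 := hxy i (by exact_mod_cast Nat.zero_le i) (by exact_mod_cast hi)
  rw [zero_add, h2]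
  show w ((i : ℤ)).toNat = w i
  congr 1

theorem Xn_irreducible {X : Set (ℤ → A)} (hirr : SubshiftIrreducible X) {n : ℕ}
    (hn : 1 ≤ n) : SubshiftIrreducible (Xn X n) := by
  intro k₁ w₁ k₂ w₂ h₁ h₂
  have hs₁ := allowed_Xn_subAdm h₁
  have hs₂ := allowed_Xn_subAdm h₂
  set ℓ₁ : ℕ := min k₁ (n - 1) with hℓ₁
  set ℓ₂ : ℕ := min k₂ (n - 1) with hℓ₂
  have hv₁ : PatAllowed X (fun i => w₁ (k₁ - ℓ₁ + i)) ℓ₁ :=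
    hs₁ (k₁ - ℓ₁) ℓ₁ (by omega) (by omega)
  have hv₂ : PatAllowed X w₂ ℓ₂ := by
    refine patAllowed_congr (fun i hi => by norm_num) (hs₂ 0 ℓ₂ (by omega) (by omega))
  obtain ⟨m, v, hv, hvl, hvr⟩ := hirr ℓ₁ _ ℓ₂ _ hv₁ hv₂
  set u : ℕ → A := fun i =>
    if i < k₁ then w₁ i else if i < k₁ + m then v (ℓ₁ + (i - k₁)) else w₂ (i - (k₁ + m))
    with hu
  have hmid : ∀ i : ℕ, k₁ - ℓ₁ ≤ i → i < k₁ + m + ℓ₂ → u i = v (i - (k₁ - ℓ₁)) := by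
    intro i hi1 hi2
    rcases Nat.lt_or_ge i k₁ with hik | hik
    · have := hvl (i - (k₁ - ℓ₁)) (by omega)
      simp only [hu, if_pos hik]
      rw [this]
      congr 1
      omega
    · rcases Nat.lt_or_ge i (k₁ + m) with him | him
      · simp only [hu, if_neg (show ¬ i < k₁ by omega), if_pos him]
        congr 1
        omega
      · have := hvr (i - (k₁ + m)) (by omega)
        simp only [hu, if_neg (show ¬ i < k₁ by omega), if_neg (show ¬ i < k₁ + m by omega)]
        rw [← this]
        congr 1
        omega
  have hsub : SubAdm X n u (k₁ + m + k₂) := by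
    intro s l hsl hl
    rcases le_or_gt (s + l) k₁ with hc1 | hc1
    · refine patAllowed_congr (fun i hi => ?_) (hs₁ s l hc1 hl)
      show w₁ (s + i) = u (s + i)
      simp only [hu, if_pos (show s + i < k₁ by omega)]
    · rcases le_or_gt (k₁ + m) s with hc2 | hc2
      · refine patAllowed_congr (fun i hi => ?_) (hs₂ (s - (k₁ + m)) l (by omega) hl)
        show w₂ (s - (k₁ + m) + i) = u (s + i)
        simp only [hu, if_neg (show ¬ s + i < k₁ by omega),
          if_neg (show ¬ s + i < k₁ + m by omega)]
        congr 1
        omega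
      · have hb1 : k₁ - ℓ₁ ≤ s := by omega
        have hb2 : s + l ≤ k₁ + m + ℓ₂ := by omega
        have hA := patAllowed_sub hv (s - (k₁ - ℓ₁)) l (by omega)
        refine patAllowed_congr (fun i hi => ?_) hA
        show v (s - (k₁ - ℓ₁) + i) = u (s + i)
        rw [hmid (s + i) (by omega) (by omega)]
        congr 1
        omega
  refine ⟨m, u, subAdm_allowed_Xn hn hsub, fun i hi => ?_, fun i hi => ?_⟩
  · simp only [hu, if_pos hi]
  · simp only [hu, if_neg (show ¬ k₁ + m + i < k₁ by omega),
      if_neg (show ¬ k₁ + m + i < k₁ + m by omega)]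
    congr 1
    omega


theorem Xn_isSFT {X : Set (ℤ → A)} [Fintype A] (hne : X.Nonempty) (n : ℕ) :
    IsSFT (Xn X n) := by
  obtain ⟨x₀, hx₀⟩ := hne
  set a₀ : A := x₀ 0 with ha₀
  refine ⟨{q : (ℕ → A) × ℕ | (∀ i, n ≤ i → q.1 i = a₀) ∧ q.2 = n ∧ ¬ PatAllowed X q.1 n},
    ?_, ?_⟩
  · apply Set.Finite.of_finite_image (f := fun q : (ℕ → A) × ℕ => fun i : Fin n => q.1 i)
    · exact Set.toFinite _
    · rintro ⟨w, k⟩ ⟨hw1, hw2, -⟩ ⟨w', k'⟩ ⟨hw1', hw2', -⟩ heq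
      simp only [Prod.mk.injEq]
      constructor
      · funext i
        rcases lt_or_ge i n with hi | hi
        · exact congrFun heq ⟨i, hi⟩
        · exact (hw1 i hi).trans (hw1' i hi).symm
      · exact hw2.trans hw2'.symm
  · apply Set.eq_of_subset_of_subset
    · rintro x hx ⟨w, k⟩ ⟨-, hq2, hq3⟩ p hocc
      dsimp only at hq2 hq3 hocc
      subst hq2
      exact hx w hq3 p hocc
    · intro x hx w hw p hocc
      set w' : ℕ → A := fun i => if i < n then w i else a₀ with hw'
      have hw'n : ¬ PatAllowed X w' n := fun hall =>
        hw (patAllowed_congr (fun i hi => by simp only [hw', if_pos hi]) hall)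
      exact hx (w', n) ⟨fun i hi => by simp only [hw', if_neg (show ¬ i < n by omega)],
        rfl, hw'n⟩ p (patOccurs_congr (fun i hi => by simp only [hw', if_pos hi]) hocc)

theorem Xn_mono {X : Set (ℤ → A)} {m n : ℕ} (hmn : m ≤ n) : Xn X n ⊆ Xn X m := by
  intro x hx w hw p hocc
  exact hw (patAllowed_congr (fun i hi => hocc i hi) (mem_Xn_window_le hx p hmn))

theorem inter_eq {X : Set (ℤ → A)} (hne : X.Nonempty) (hsft : IsSFT X) :
    (⋂ n ∈ {n : ℕ | 1 ≤ n}, Xn X n) = X := by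
  apply Set.eq_of_subset_of_subset
  · intro x hx
    obtain ⟨F, hFfin, hFdef⟩ := hsft
    rw [hFdef]
    rintro ⟨w, k⟩ hwF p hocc
    dsimp only at hocc
    rcases Nat.eq_zero_or_pos k with rfl | hk
    · obtain ⟨y, hy⟩ := hne
      rw [hFdef] at hy
      exact hy (w, 0) hwF p (fun i hi => absurd hi (by omega))
    · have hxk : x ∈ Xn X k := Set.mem_iInter₂.mp hx k hk
      obtain ⟨y, hy, q, hoy⟩ := mem_Xn_window hxk p
      rw [hFdef] at hy
      exact hy (w, k) hwF q (fun i hi => (hoy i hi).trans (hocc i hi))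
  · intro x hx
    exact Set.mem_iInter₂.mpr (fun n _ => subset_Xn hx)

end S11

/-- a nonempty irreducible SFT `X` over `ℤ` is the intersection of the
decreasing sequence of irreducible SFTs `X_n`, where `X_n` is defined by forbidding all
forbidden patterns of `X` of length `n`. -/
theorem statement11 {A : Type*} [Fintype A] (X : Set (ℤ → A)) (hne : X.Nonempty)
    (hsft : IsSFT X) (hirr : SubshiftIrreducible X) :
    (∀ n : ℕ, 1 ≤ n →
      IsSFT {x : ℤ → A | ∀ w : ℕ → A, ¬ PatAllowed X w n → ∀ p : ℤ, ¬ PatOccurs x w n p} ∧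
      SubshiftIrreducible
        {x : ℤ → A | ∀ w : ℕ → A, ¬ PatAllowed X w n → ∀ p : ℤ, ¬ PatOccurs x w n p}) ∧
    (∀ m n : ℕ, 1 ≤ m → m ≤ n →
      {x : ℤ → A | ∀ w : ℕ → A, ¬ PatAllowed X w n → ∀ p : ℤ, ¬ PatOccurs x w n p} ⊆
      {x : ℤ → A | ∀ w : ℕ → A, ¬ PatAllowed X w m → ∀ p : ℤ, ¬ PatOccurs x w m p}) ∧
    (⋂ n ∈ {n : ℕ | 1 ≤ n},
      {x : ℤ → A | ∀ w : ℕ → A, ¬ PatAllowed X w n → ∀ p : ℤ, ¬ PatOccurs x w n p}) = X :=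
  ⟨fun n hn => ⟨S11.Xn_isSFT hne n, S11.Xn_irreducible hirr hn⟩,
   fun _ _ _ hmn => S11.Xn_mono hmn,
   S11.inter_eq hne hsft⟩
end

section
/- Let σ be a permutation of ℤ with bounded displacement (sup_n |σ(n) − n| < ∞). Then for any set M ⊂ ℤ with σ(M) △ M finite, the map assigning to σ the integer |σ(M) \ M| − |M \ σ(M)| defines a group homomorphism from the group of bounded-displacement permutations stabilizing M up to finite sets to ℤ. -/
open Set

/-- The "transfer" index of a permutation `σ` relative to a set `M`. -/
noncomputable def transferIdx (M : Set ℤ) (σ : Equiv.Perm ℤ) : ℤ :=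
  (((σ : ℤ → ℤ) '' M \ M).ncard : ℤ) - ((M \ (σ : ℤ → ℤ) '' M).ncard : ℤ)

lemma diff_eq_inter_diff' {α : Type*} {X Y S : Set α} (h : symmDiff X Y ⊆ S) :
    X \ Y = (X ∩ S) \ (Y ∩ S) := by
  ext x
  simp only [mem_diff, mem_inter_iff, symmDiff_def, Set.sup_eq_union, Set.subset_def,
    mem_union] at *
  constructor
  · rintro ⟨hx, hy⟩
    exact ⟨⟨hx, h x (Or.inl ⟨hx, hy⟩)⟩, fun h' => hy h'.1⟩
  · rintro ⟨⟨hx, hs⟩, hy⟩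
    exact ⟨hx, fun hyx => hy ⟨hyx, hs⟩⟩

lemma fin_diff_sub {α : Type*} {A B : Set α} (hA : A.Finite) (hB : B.Finite) :
    ((A \ B).ncard : ℤ) - ((B \ A).ncard : ℤ) = (A.ncard : ℤ) - (B.ncard : ℤ) := by
  have h1 : (A \ B).ncard + B.ncard = (A ∪ B).ncard := Set.ncard_diff_add_ncard A B hA hB
  have h2 : (B \ A).ncard + A.ncard = (B ∪ A).ncard := Set.ncard_diff_add_ncard B A hB hA
  have h3 : (A ∪ B) = (B ∪ A) := Set.union_comm A B
  rw [h3] at h1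
  omega

lemma dd {α : Type*} {X Y Z : Set α} (hXY : (symmDiff X Y).Finite)
    (hYZ : (symmDiff Y Z).Finite) :
    ((X \ Z).ncard : ℤ) - ((Z \ X).ncard : ℤ) =
      (((X \ Y).ncard : ℤ) - ((Y \ X).ncard : ℤ)) +
      (((Y \ Z).ncard : ℤ) - ((Z \ Y).ncard : ℤ)) := by
  set S := symmDiff X Y ∪ symmDiff Y Z with hS
  have hSfin : S.Finite := hXY.union hYZ
  have hXY' : symmDiff X Y ⊆ S := subset_union_left
  have hYZ' : symmDiff Y Z ⊆ S := subset_union_right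
  have hXZ' : symmDiff X Z ⊆ S := (symmDiff_triangle X Y Z).trans le_rfl
  have hYX' : symmDiff Y X ⊆ S := by rwa [symmDiff_comm]
  have hZY' : symmDiff Z Y ⊆ S := by rwa [symmDiff_comm]
  have hZX' : symmDiff Z X ⊆ S := by rwa [symmDiff_comm]
  rw [diff_eq_inter_diff' hXZ', diff_eq_inter_diff' hZX', diff_eq_inter_diff' hXY',
    diff_eq_inter_diff' hYX', diff_eq_inter_diff' hYZ', diff_eq_inter_diff' hZY']
  have fX : (X ∩ S).Finite := hSfin.subset inter_subset_right
  have fY : (Y ∩ S).Finite := hSfin.subset inter_subset_right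
  have fZ : (Z ∩ S).Finite := hSfin.subset inter_subset_right
  rw [fin_diff_sub fX fZ, fin_diff_sub fX fY, fin_diff_sub fY fZ]
  ring

lemma d_image {α : Type*} {f : α → α} (hf : Function.Injective f) (X Y : Set α) :
    ((f '' X \ f '' Y).ncard : ℤ) - ((f '' Y \ f '' X).ncard : ℤ) =
      ((X \ Y).ncard : ℤ) - ((Y \ X).ncard : ℤ) := by
  rw [← Set.image_diff hf, ← Set.image_diff hf, Set.ncard_image_of_injective _ hf,
    Set.ncard_image_of_injective _ hf]

/-- on the group of bounded-displacement permutations of `ℤ` stabilizing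
`M` up to finite sets, `σ ↦ |σ(M) \ M| − |M \ σ(M)|` is a group homomorphism to `ℤ`. -/
theorem statement13 (M : Set ℤ) (σ τ : Equiv.Perm ℤ)
    (hσd : ∃ C : ℤ, ∀ n : ℤ, |σ n - n| ≤ C) (hτd : ∃ C : ℤ, ∀ n : ℤ, |τ n - n| ≤ C)
    (hσM : (symmDiff ((σ : ℤ → ℤ) '' M) M).Finite)
    (hτM : (symmDiff ((τ : ℤ → ℤ) '' M) M).Finite) :
    transferIdx M (σ * τ) = transferIdx M σ + transferIdx M τ := by
  have hinj : Function.Injective (σ : ℤ → ℤ) := σ.injective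
  have himg : ((σ * τ : Equiv.Perm ℤ) : ℤ → ℤ) '' M = (σ : ℤ → ℤ) '' ((τ : ℤ → ℤ) '' M) := by
    rw [Equiv.Perm.coe_mul, Set.image_comp]
  have h1 : (symmDiff ((σ : ℤ → ℤ) '' ((τ : ℤ → ℤ) '' M)) ((σ : ℤ → ℤ) '' M)).Finite := by
    rw [← Set.image_symmDiff hinj]
    exact hτM.image _
  unfold transferIdx
  rw [himg]
  have := dd (X := (σ : ℤ → ℤ) '' ((τ : ℤ → ℤ) '' M)) (Y := (σ : ℤ → ℤ) '' M) (Z := M) h1 hσM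
  rw [this, d_image hinj]
  ring
end

section
/- Let A be an alphabet with q ≥ 3 letters and let X_pro ⊂ A^ℤ be the subshift of bi-infinite sequences with no two consecutive equal letters. Then the topological full group ⟦X_pro⟧ contains a nonabelian free subgroup; more precisely, the involutions σ_i (i ∈ A) defined by σ_i(w) = shift^{κ_i(w)}(w), with κ_i(w) = 1 if w(0) = a_i, κ_i(w) = −1 if w(1) = a_i, and 0 otherwise, generate a free product of q copies of ℤ/2ℤ. -/
variable {X : Type*} [TopologicalSpace X]

@[simp] lemma homeo_one_apply (x : X) : (1 : X ≃ₜ X) x = x := rfl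

/-- The topological full group of a homeomorphism `φ`. -/
def fullGroupZ (φ : X ≃ₜ X) : Subgroup (X ≃ₜ X) where
  carrier := {ψ | ∃ κ : X → ℤ, IsLocallyConstant κ ∧ ∀ x, ψ x = (φ ^ κ x) x}
  one_mem' := ⟨0, IsLocallyConstant.const 0, fun x => by simp⟩
  mul_mem' := by
    rintro ψ₁ ψ₂ ⟨κ₁, h₁, e₁⟩ ⟨κ₂, h₂, e₂⟩
    refine ⟨fun x => κ₁ (ψ₂ x) + κ₂ x, (h₁.comp_continuous ψ₂.continuous).add h₂, fun x => ?_⟩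
    rw [zpow_add]
    simp only [homeo_mul_apply]
    rw [← e₂, ← e₁]
  inv_mem' := by
    rintro ψ ⟨κ, h, e⟩
    refine ⟨fun x => -κ (ψ.symm x), (h.comp_continuous ψ.symm.continuous).neg, fun x => ?_⟩
    have := e (ψ.symm x)
    conv_lhs => rw [show ψ⁻¹ x = ψ.symm x from rfl]
    have h2 : (φ ^ (-κ (ψ.symm x))) (ψ (ψ.symm x)) = ψ.symm x := by
      rw [this, ← homeo_mul_apply, ← zpow_add]
      simp
    rw [ψ.apply_symm_apply] at h2
    exact h2.symm

/-- The subshift of proper bi-infinite words: no two consecutive equal letters. -/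
def Xpro (A : Type*) : Set (ℤ → A) := {w | ∀ n : ℤ, w n ≠ w (n + 1)}

/-- The shift homeomorphism on the proper subshift. -/
def shiftPro (A : Type*) [TopologicalSpace A] : ↥(Xpro A) ≃ₜ ↥(Xpro A) where
  toFun w := ⟨fun n => (w : ℤ → A) (n - 1), fun n => by simpa using w.2 (n - 1)⟩
  invFun w := ⟨fun n => (w : ℤ → A) (n + 1), fun n => w.2 (n + 1)⟩
  left_inv w := by ext n; simp
  right_inv w := by ext n; simp
  continuous_toFun := by
    apply Continuous.subtype_mk
    exact continuous_pi fun n => (continuous_apply (n - 1)).comp continuous_subtype_val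
  continuous_invFun := by
    apply Continuous.subtype_mk
    exact continuous_pi fun n => (continuous_apply (n + 1)).comp continuous_subtype_val

set_option linter.unusedSectionVars false

namespace VanDouwen

variable {A : Type*} [Fintype A] [DecidableEq A] [TopologicalSpace A] [DiscreteTopology A]

/-- The underlying function of the involution `σ_i`. -/
def sigmaFun (i : A) (w : ↥(Xpro A)) : ↥(Xpro A) :=
  if (w : ℤ → A) 0 = i then shiftPro A w
  else if (w : ℤ → A) 1 = i then (shiftPro A).symm w else w

lemma shiftPro_apply (w : ↥(Xpro A)) (n : ℤ) : (shiftPro A w : ℤ → A) n = (w : ℤ → A) (n - 1) := rfl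

lemma shiftPro_symm_apply (w : ↥(Xpro A)) (n : ℤ) :
    ((shiftPro A).symm w : ℤ → A) n = (w : ℤ → A) (n + 1) := rfl

lemma sigmaFun_apply (i : A) (w : ↥(Xpro A)) (n : ℤ) :
    (sigmaFun i w : ℤ → A) n =
      if (w : ℤ → A) 0 = i then (w : ℤ → A) (n - 1)
      else if (w : ℤ → A) 1 = i then (w : ℤ → A) (n + 1)
      else (w : ℤ → A) n := by
  unfold sigmaFun; split_ifs <;> rfl

lemma sigmaFun_invol (i : A) (w : ↥(Xpro A)) : sigmaFun i (sigmaFun i w) = w := by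
  by_cases h0 : (w : ℤ → A) 0 = i
  · have e1 : sigmaFun i w = shiftPro A w := if_pos h0
    rw [e1]
    unfold sigmaFun
    have a0 : (shiftPro A w : ℤ → A) 0 ≠ i := by
      rw [shiftPro_apply]
      have := w.2 (0 - 1)
      simpa [h0] using this
    have a1 : (shiftPro A w : ℤ → A) 1 = i := by
      rw [shiftPro_apply]; simpa using h0
    rw [if_neg a0, if_pos a1, Homeomorph.symm_apply_apply]
  · by_cases h1 : (w : ℤ → A) 1 = i
    · have e1 : sigmaFun i w = (shiftPro A).symm w := by
        unfold sigmaFun; rw [if_neg h0, if_pos h1]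
      rw [e1]
      unfold sigmaFun
      have a0 : ((shiftPro A).symm w : ℤ → A) 0 = i := by
        rw [shiftPro_symm_apply]; simpa using h1
      rw [if_pos a0, Homeomorph.apply_symm_apply]
    · have e1 : sigmaFun i w = w := by
        unfold sigmaFun; rw [if_neg h0, if_neg h1]
      rw [e1]
      unfold sigmaFun; rw [if_neg h0, if_neg h1]

lemma continuous_coord (m : ℤ) : Continuous fun w : ↥(Xpro A) => (w : ℤ → A) m :=
  (continuous_apply m).comp continuous_subtype_val

lemma isClopen_coord (i : A) (m : ℤ) : IsClopen {w : ↥(Xpro A) | (w : ℤ → A) m = i} :=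
  (isClopen_discrete {i}).preimage (continuous_coord m)

lemma sigmaFun_continuous (i : A) : Continuous (sigmaFun i) := by
  unfold sigmaFun
  apply Continuous.if
  · intro a ha
    rw [(isClopen_coord i 0).frontier_eq] at ha
    exact absurd ha (Set.notMem_empty a)
  · exact (shiftPro A).continuous
  · apply Continuous.if
    · intro a ha
      rw [(isClopen_coord i 1).frontier_eq] at ha
      exact absurd ha (Set.notMem_empty a)
    · exact (shiftPro A).symm.continuous
    · exact continuous_id
/-- The involution `σ_i` as a homeomorphism. -/
def sigma (i : A) : ↥(Xpro A) ≃ₜ ↥(Xpro A) where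
  toFun := sigmaFun i
  invFun := sigmaFun i
  left_inv := sigmaFun_invol i
  right_inv := sigmaFun_invol i
  continuous_toFun := sigmaFun_continuous i
  continuous_invFun := sigmaFun_continuous i

lemma sigma_apply (i : A) (w : ↥(Xpro A)) : sigma i w = sigmaFun i w := rfl

lemma sigma_sq (i : A) : sigma i * sigma i = 1 := by
  apply Homeomorph.ext
  intro w
  show sigma i (sigma i w) = w
  rw [sigma_apply, sigma_apply]
  exact sigmaFun_invol i w

lemma sigma_inv (i : A) : (sigma i)⁻¹ = sigma i :=
  inv_eq_of_mul_eq_one_right (sigma_sq i)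

lemma sigma_mem (i : A) : sigma i ∈ fullGroupZ (shiftPro A) := by
  refine ⟨fun w => if (w : ℤ → A) 0 = i then 1 else if (w : ℤ → A) 1 = i then -1 else 0, ?_, ?_⟩
  · rw [IsLocallyConstant.iff_continuous]
    apply Continuous.if
    · intro a ha
      rw [(isClopen_coord i 0).frontier_eq] at ha
      exact absurd ha (Set.notMem_empty a)
    · exact continuous_const
    · apply Continuous.if
      · intro a ha
        rw [(isClopen_coord i 1).frontier_eq] at ha
        exact absurd ha (Set.notMem_empty a)
      · exact continuous_const
      · exact continuous_const
  · intro w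
    rw [sigma_apply]
    unfold sigmaFun
    beta_reduce
    by_cases h0 : (w : ℤ → A) 0 = i
    · rw [if_pos h0, if_pos h0, zpow_one]
    · by_cases h1 : (w : ℤ → A) 1 = i
      · rw [if_neg h0, if_neg h0, if_pos h1, if_pos h1, zpow_neg_one]
        rfl
      · rw [if_neg h0, if_neg h0, if_neg h1, if_neg h1, zpow_zero]
        rfl

lemma sigma_shifts {i : A} {w : ↥(Xpro A)} (h0 : (w : ℤ → A) 0 = i) :
    sigma i w = shiftPro A w := by
  rw [sigma_apply]; unfold sigmaFun; rw [if_pos h0]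

lemma shift_pow_apply (k : ℕ) (w : ↥(Xpro A)) (n : ℤ) :
    (((shiftPro A) ^ k) w : ℤ → A) n = (w : ℤ → A) (n - k) := by
  induction k generalizing w n with
  | zero => simp
  | succ m ih =>
    rw [pow_succ]
    rw [homeo_mul_apply]
    rw [ih ((shiftPro A) w) n, shiftPro_apply]
    congr 1
    push_cast
    ring
lemma prod_eq_shift : ∀ (l : List A) (w : ↥(Xpro A)),
    (∀ k : ℕ, (hk : k < l.length) → (w : ℤ → A) ((k : ℤ) + 1 - l.length) = l.get ⟨k, hk⟩) →
    ((l.map sigma).prod) w = ((shiftPro A) ^ l.length) w := by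
  intro l
  induction l using List.reverseRecOn with
  | nil => intro w _; simp
  | append_singleton t j ih =>
    intro w hw
    have hlen : (t ++ [j]).length = t.length + 1 := by simp
    have h0 : (w : ℤ → A) 0 = j := by
      have := hw t.length (by simp)
      have e : ((t.length : ℤ) + 1 - (((t ++ [j]).length : ℕ) : ℤ)) = 0 := by
        rw [hlen]; push_cast; ring
      rw [e] at this
      rw [this, List.get_eq_getElem]
      exact List.getElem_concat_length rfl _
    have hmap : ((t ++ [j]).map sigma).prod = (t.map sigma).prod * sigma j := by
      simp
    rw [hmap, homeo_mul_apply, sigma_shifts h0]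
    have hw' : ∀ k : ℕ, (hk : k < t.length) →
        ((shiftPro A w : ↥(Xpro A)) : ℤ → A) ((k : ℤ) + 1 - t.length) = t.get ⟨k, hk⟩ := by
      intro k hk
      rw [shiftPro_apply]
      have := hw k (by simp; omega)
      have e : ((k : ℤ) + 1 - (t.length : ℤ) - 1) = (k : ℤ) + 1 - (((t ++ [j]).length : ℕ) : ℤ) := by
        rw [hlen]; push_cast; ring
      rw [e, this]
      rw [List.get_eq_getElem, List.get_eq_getElem, List.getElem_append_left]
    rw [ih (shiftPro A w) hw', hlen, pow_succ, homeo_mul_apply]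

lemma exists_ne_ne (hq : 3 ≤ Fintype.card A) (x y : A) : ∃ z, z ≠ x ∧ z ≠ y := by
  by_contra h
  push_neg at h
  have hsub : (Finset.univ : Finset A) ⊆ {x, y} := by
    intro z _
    rcases eq_or_ne z x with rfl | hz
    · simp
    · simp [h z hz]
  have h1 := Finset.card_le_card hsub
  have h2 : ({x, y} : Finset A).card ≤ 2 :=
    Finset.card_insert_le x {y} |>.trans (by simp)
  rw [Finset.card_univ] at h1
  omega

lemma key_lemma (hq : 3 ≤ Fintype.card A) (l : List A) (hne : l ≠ [])
    (hch : l.Chain' (· ≠ ·)) : (l.map sigma).prod ≠ 1 := by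
  have hpos : 0 < l.length := List.length_pos_iff.mpr hne
  set n := l.length with hn
  have hi1 : 0 < l.length := hpos
  set i1 := l.get ⟨0, hpos⟩ with hi1def
  set iN := l.get ⟨n - 1, by omega⟩ with hiNdef
  obtain ⟨z, hz1, hz2⟩ := exists_ne_ne hq iN i1
  obtain ⟨d, hd1, _⟩ := exists_ne_ne hq i1 i1
  -- the witness sequence
  set wf : ℤ → A := fun m =>
    if 1 ≤ m then (if Even m then iN else z)
    else if 1 - (n : ℤ) ≤ m then l.getD (m + n - 1).toNat i1
    else (if Even (m + n) then d else i1) with hwf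
  have hchain : ∀ k : ℕ, k + 1 < n → l.getD k i1 ≠ l.getD (k+1) i1 := by
    intro k hk
    rw [List.getD_eq_getElem l i1 (by omega), List.getD_eq_getElem l i1 (by omega)]
    exact List.isChain_iff_getElem.mp hch k (by omega)
  have hmid : ∀ m : ℤ, 1 - (n : ℤ) ≤ m → m ≤ 0 → wf m = l.getD (m + n - 1).toNat i1 := by
    intro m h1 h2
    rw [hwf]
    simp only []
    rw [if_neg (by omega), if_pos h1]
  have hproper : wf ∈ Xpro A := by
    intro m
    rcases le_or_gt 1 m with hm | hm
    · -- both in right tail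
      have e1 : wf m = if Even m then iN else z := by rw [hwf]; simp only []; rw [if_pos hm]
      have e2 : wf (m + 1) = if Even (m + 1) then iN else z := by
        rw [hwf]; simp only []; rw [if_pos (by omega)]
      rw [e1, e2]
      rcases Int.even_or_odd m with he | he
      · rw [if_pos he, if_neg (by rw [Int.even_add_one, not_not]; exact he)]
        exact fun hh => hz1 hh.symm
      · have hne' : ¬ Even m := Int.not_even_iff_odd.mpr he
        rw [if_neg hne', if_pos (Int.even_add_one.mpr hne')]
        exact hz1
    · rcases le_or_gt (1 - (n : ℤ)) m with hm2 | hm2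
      · rcases eq_or_lt_of_le (show m ≤ 0 by omega) with hm0 | hm0
        · -- m = 0 : junction with right tail
          subst hm0
          have e2 : wf (0 + 1) = z := by
            rw [show (0 : ℤ) + 1 = 1 by norm_num, hwf]
            simp only []; rw [if_pos le_rfl, if_neg (by decide)]
          have e1 : wf 0 = iN := by
            rw [hmid 0 hm2 le_rfl, show ((0 : ℤ) + n - 1).toNat = n - 1 by omega,
              List.getD_eq_getElem l i1 (by omega)]
            rfl
          rw [e1, e2]
          exact fun hh => hz1 hh.symm
        · -- middle-middle
          rw [hmid m hm2 (by omega), hmid (m+1) (by omega) (by omega)]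
          have e1 : (m + 1 + n - 1).toNat = (m + n - 1).toNat + 1 := by omega
          rw [e1]
          exact hchain (m + n - 1).toNat (by omega)
      · rcases eq_or_lt_of_le (show m + 1 ≤ 1 - (n : ℤ) by omega) with hm3 | hm3
        · -- m = -n : junction with left tail
          have e1 : wf m = d := by
            rw [hwf]; simp only []
            rw [if_neg (by omega), if_neg (by omega), if_pos (by rw [show m + n = 0 by omega]; decide)]
          have e2 : wf (m + 1) = i1 := by
            rw [hmid (m+1) (by omega) (by omega)]
            rw [show (m + 1 + n - 1).toNat = 0 by omega, List.getD_eq_getElem l i1 (by omega)]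
            rfl
          rw [e1, e2]
          exact hd1
        · -- left-left
          have e1 : wf m = if Even (m + n) then d else i1 := by
            rw [hwf]; simp only []; rw [if_neg (by omega), if_neg (by omega)]
          have e2 : wf (m + 1) = if Even (m + 1 + n) then d else i1 := by
            rw [hwf]; simp only []; rw [if_neg (by omega), if_neg (by omega)]
          rw [e1, e2]
          rcases Int.even_or_odd (m + n) with he | he
          · rw [if_pos he, if_neg (by
              rw [show m + 1 + (n : ℤ) = (m + n) + 1 by ring, Int.even_add_one, not_not]; exact he)]
            exact hd1
          · have hne' : ¬ Even (m + (n : ℤ)) := Int.not_even_iff_odd.mpr he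
            rw [if_neg hne', if_pos (by
              rw [show m + 1 + (n : ℤ) = (m + n) + 1 by ring]; exact Int.even_add_one.mpr hne')]
            exact fun hh => hd1 hh.symm
  set W : ↥(Xpro A) := ⟨wf, hproper⟩ with hW
  have hhyp : ∀ k : ℕ, (hk : k < l.length) → (W : ℤ → A) ((k : ℤ) + 1 - l.length) = l.get ⟨k, hk⟩ := by
    intro k hk
    show wf ((k : ℤ) + 1 - n) = _
    rw [hmid _ (by omega) (by omega)]
    rw [show ((k : ℤ) + 1 - n + n - 1).toNat = k by omega]
    rw [List.getD_eq_getElem l i1 (by omega)]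
    rfl
  intro hcontra
  have h1 : ((l.map sigma).prod) W = W := by rw [hcontra]; rfl
  rw [prod_eq_shift l W hhyp] at h1
  have h2 := congrArg (fun v : ↥(Xpro A) => (v : ℤ → A) 1) h1
  rw [shift_pow_apply] at h2
  have e1 : wf ((1 : ℤ) - n) = i1 := by
    rw [hmid _ (by omega) (by omega)]
    rw [show ((1 : ℤ) - n + n - 1).toNat = 0 by omega, List.getD_eq_getElem l i1 (by omega)]
    rfl
  have e2 : wf 1 = z := by
    rw [hwf]; simp only []; rw [if_pos le_rfl, if_neg (by decide)]
  have : wf ((1 : ℤ) - n) = wf 1 := h2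
  rw [e1, e2] at this
  exact hz2 this.symm
/-- The homomorphism from `ℤ/2` determined by an involution. -/
def invHom {G : Type*} [Group G] (g : G) (hg : g * g = 1) : Multiplicative (ZMod 2) →* G where
  toFun x := g ^ (Multiplicative.toAdd x).val
  map_one' := by
    show g ^ (Multiplicative.toAdd (1 : Multiplicative (ZMod 2))).val = 1
    rw [show (Multiplicative.toAdd (1 : Multiplicative (ZMod 2))).val = 0 by decide, pow_zero]
  map_mul' x y := by
    have hc : ∀ a : ZMod 2, a = 0 ∨ a = 1 := by decide
    show g ^ (Multiplicative.toAdd (x * y)).val =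
      g ^ (Multiplicative.toAdd x).val * g ^ (Multiplicative.toAdd y).val
    have ht : Multiplicative.toAdd (x * y) = Multiplicative.toAdd x + Multiplicative.toAdd y := rfl
    rw [ht]
    rcases hc (Multiplicative.toAdd x) with h | h <;>
      rcases hc (Multiplicative.toAdd y) with h' | h' <;> rw [h, h']
    · rw [show ((0 : ZMod 2) + 0).val = 0 by decide, show ((0 : ZMod 2)).val = 0 by decide,
        pow_zero, mul_one]
    · rw [show ((0 : ZMod 2) + 1).val = 1 by decide, show ((0 : ZMod 2)).val = 0 by decide,
        show ((1 : ZMod 2)).val = 1 by decide, pow_zero, one_mul]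
    · rw [show ((1 : ZMod 2) + 0).val = 1 by decide, show ((0 : ZMod 2)).val = 0 by decide,
        show ((1 : ZMod 2)).val = 1 by decide, pow_zero, mul_one]
    · rw [show ((1 : ZMod 2) + 1).val = 0 by decide, show ((1 : ZMod 2)).val = 1 by decide,
        pow_zero, pow_one]
      exact hg.symm

lemma invHom_of {G : Type*} [Group G] (g : G) (hg : g * g = 1) :
    invHom g hg (Multiplicative.ofAdd 1) = g := by
  show g ^ ((1 : ZMod 2)).val = g
  rw [show ((1 : ZMod 2)).val = 1 by decide, pow_one]

lemma not_one_eq_ofAdd_one (x : Multiplicative (ZMod 2)) (hx : x ≠ 1) :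
    x = Multiplicative.ofAdd 1 := by
  revert hx
  have hc : ∀ a : ZMod 2, a = 0 ∨ a = 1 := by decide
  rcases hc (Multiplicative.toAdd x) with h | h
  · intro hx
    exact absurd (by show Multiplicative.toAdd x = 0; rw [h]) (fun hh => hx (by
      have : x = Multiplicative.ofAdd 0 := by
        show x = Multiplicative.ofAdd 0
        have := congrArg Multiplicative.ofAdd h
        simpa using this
      simpa using this))
  · intro _
    have := congrArg Multiplicative.ofAdd h
    simpa using this

/-- The free-product homomorphism sending each generator to `σ_i`. -/
noncomputable def Phi : Monoid.CoprodI (fun _ : A => Multiplicative (ZMod 2)) →*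
    (↥(Xpro A) ≃ₜ ↥(Xpro A)) :=
  Monoid.CoprodI.lift (fun i => invHom (sigma i) (sigma_sq i))

lemma Phi_of (i : A) : Phi (Monoid.CoprodI.of (i := i) (Multiplicative.ofAdd 1)) = sigma i := by
  rw [Phi, Monoid.CoprodI.lift_of]
  exact invHom_of _ _

lemma Phi_injective (hq : 3 ≤ Fintype.card A) :
    Function.Injective (Phi : Monoid.CoprodI (fun _ : A => Multiplicative (ZMod 2)) →* _) := by
  rw [injective_iff_map_eq_one]
  intro g hg
  set W := Monoid.CoprodI.Word.equiv g with hWdef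
  have hprod : W.prod = g := Monoid.CoprodI.Word.equiv.left_inv g
  by_contra hg1
  have hne : W.toList ≠ [] := by
    intro hnil
    apply hg1
    rw [← hprod]
    unfold Monoid.CoprodI.Word.prod
    rw [hnil]
    simp
  have hPhi : Phi g = ((W.toList.map Sigma.fst).map sigma).prod := by
    rw [← hprod]
    unfold Monoid.CoprodI.Word.prod
    rw [map_list_prod, List.map_map, List.map_map]
    congr 1
    apply List.map_congr_left
    intro p hp
    have hp1 : p.snd ≠ 1 := W.ne_one p hp
    show Phi (Monoid.CoprodI.of p.snd) = sigma p.fst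
    rw [not_one_eq_ofAdd_one p.snd hp1]
    exact Phi_of p.fst
  have hchain : (W.toList.map Sigma.fst).Chain' (· ≠ ·) := by
    rw [List.Chain', List.isChain_map]
    exact W.chain_ne
  have := key_lemma hq (W.toList.map Sigma.fst) (by simpa using hne) hchain
  rw [← hPhi] at this
  exact this hg
lemma reduced_chain {α : Type*} :
    ∀ L : List (α × Bool),
      (∀ (L₁ L₂ : List (α × Bool)) (x : α) (bb : Bool), L ≠ L₁ ++ (x, bb) :: (x, !bb) :: L₂) →
      List.Chain' (fun p q => ¬(q.1 = p.1 ∧ q.2 = !p.2)) L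
  | [] => fun _ => List.isChain_nil
  | [x] => fun _ => List.isChain_singleton x
  | x :: y :: t => fun h => by
      rw [List.Chain', List.isChain_cons_cons]
      constructor
      · rintro ⟨h1, h2⟩
        apply h [] t x.1 x.2
        have hy : y = (x.1, !x.2) := by
          rw [← h1, ← h2]
        rw [hy]
        simp
      · exact reduced_chain (y :: t) (fun L₁ L₂ x' b' hh => h (x :: L₁) L₂ x' b' (by rw [hh]; rfl))

section FreePart

variable (a b c : A)

/-- letter choice for the two free generators -/
def yy : Fin 2 → A := fun j => if j = 0 then b else c

/-- the two free generators -/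
def genH : Fin 2 → (↥(Xpro A) ≃ₜ ↥(Xpro A)) := fun j => sigma a * sigma (yy b c j)

variable {a b c}

lemma a_ne_yy (hab : a ≠ b) (hac : a ≠ c) (j : Fin 2) : a ≠ yy b c j := by
  unfold yy
  by_cases hj : j = 0
  · rw [if_pos hj]; exact hab
  · rw [if_neg hj]; exact hac

lemma yy_ne_yy (hbc : b ≠ c) {j j' : Fin 2} (hjj : j ≠ j') : yy b c j ≠ yy b c j' := by
  unfold yy
  fin_cases j <;> fin_cases j' <;> simp_all [yy]
  exact fun h => hbc h.symm


lemma genH_inv (j : Fin 2) : (genH a b c j)⁻¹ = sigma (yy b c j) * sigma a := by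
  unfold genH
  rw [mul_inv_rev, sigma_inv, sigma_inv]

lemma blockProd (hab : a ≠ b) (hac : a ≠ c) (hbc : b ≠ c) :
    ∀ (L' : List (Fin 2 × Bool)) (x : Fin 2 × Bool),
      List.Chain' (fun p q => ¬(q.1 = p.1 ∧ q.2 = !p.2)) (x :: L') →
      ∃ l : List A, l.Chain' (· ≠ ·) ∧
        (l.map sigma).prod =
          (((x :: L').map fun p => cond p.2 (genH a b c p.1) (genH a b c p.1)⁻¹)).prod ∧
        ∃ rest : List A,
          l = (if x.2 then [a, yy b c x.1] else [yy b c x.1]) ++ rest := by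
  intro L'
  induction L' with
  | nil =>
    intro x _
    rcases x with ⟨j, xb⟩
    cases xb
    · refine ⟨[yy b c j, a], ?_, ?_, [a], ?_⟩
      · exact List.isChain_pair.mpr (a_ne_yy hab hac j).symm
      · simp [genH_inv, List.prod_cons]
      · simp
    · refine ⟨[a, yy b c j], ?_, ?_, [], ?_⟩
      · exact List.isChain_pair.mpr (a_ne_yy hab hac j)
      · simp [genH, List.prod_cons, mul_assoc]
      · simp
  | cons x' L'' ih =>
    intro x hch
    obtain ⟨hP, hch'⟩ := List.isChain_cons_cons.mp hch
    obtain ⟨l', hchl', hprod', rest', hpat'⟩ := ih x' hch'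
    rcases x with ⟨j, xb⟩
    rcases x' with ⟨j', xb'⟩
    have hrhs : (((⟨j, xb⟩ :: ⟨j', xb'⟩ :: L'' : List (Fin 2 × Bool)).map
          fun p => cond p.2 (genH a b c p.1) (genH a b c p.1)⁻¹)).prod =
        (cond xb (genH a b c j) (genH a b c j)⁻¹) *
          (((⟨j', xb'⟩ :: L'' : List (Fin 2 × Bool)).map
            fun p => cond p.2 (genH a b c p.1) (genH a b c p.1)⁻¹)).prod := by
      simp [List.prod_cons]
    cases xb
    · -- x = (j, false), block is [yy j, a]
      cases xb'
      · -- x' = (j', false); head of l' is yy j' : no collapse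
        have hl' : l' = yy b c j' :: rest' := by simpa using hpat'
        refine ⟨yy b c j :: a :: l', ?_, ?_, a :: l', ?_⟩
        · rw [List.Chain', List.isChain_cons_cons]
          refine ⟨(a_ne_yy hab hac j).symm, ?_⟩
          rw [hl', List.isChain_cons_cons]
          exact ⟨a_ne_yy hab hac j', by rw [← hl']; exact hchl'⟩
        · rw [hrhs, ← hprod']
          simp [genH_inv, List.prod_cons, mul_assoc]
        · simp
      · -- x' = (j', true): collapse
        have hjj : j' ≠ j := by
          intro hh
          exact hP ⟨hh, rfl⟩
        have hl' : l' = a :: yy b c j' :: rest' := by simpa using hpat'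
        refine ⟨yy b c j :: yy b c j' :: rest', ?_, ?_, yy b c j' :: rest', ?_⟩
        · rw [List.Chain', List.isChain_cons_cons]
          refine ⟨yy_ne_yy hbc (Ne.symm hjj), ?_⟩
          have := hchl'
          rw [hl', List.Chain', List.isChain_cons_cons] at this
          exact this.2
        · rw [hrhs, ← hprod', hl']
          simp only [List.map_cons, List.prod_cons, genH_inv, Bool.cond_false, Bool.cond_true]
          rw [mul_assoc, ← mul_assoc (sigma a) (sigma a), sigma_sq, one_mul]
        · simp
    · -- x = (j, true), block is [a, yy j] : never collapses
      cases xb'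
      · -- x' = (j', false)
        have hjj : j' ≠ j := by
          intro hh
          exact hP ⟨hh, rfl⟩
        have hl' : l' = yy b c j' :: rest' := by simpa using hpat'
        refine ⟨a :: yy b c j :: l', ?_, ?_, l', ?_⟩
        · rw [List.Chain', List.isChain_cons_cons]
          refine ⟨a_ne_yy hab hac j, ?_⟩
          rw [hl', List.isChain_cons_cons]
          exact ⟨yy_ne_yy hbc (Ne.symm hjj), by rw [← hl']; exact hchl'⟩
        · rw [hrhs, ← hprod']
          simp [genH, List.prod_cons, mul_assoc]
        · simp
      · -- x' = (j', true)
        have hl' : l' = a :: yy b c j' :: rest' := by simpa using hpat'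
        refine ⟨a :: yy b c j :: l', ?_, ?_, l', ?_⟩
        · rw [List.Chain', List.isChain_cons_cons]
          refine ⟨a_ne_yy hab hac j, ?_⟩
          rw [hl', List.isChain_cons_cons]
          exact ⟨(a_ne_yy hab hac j).symm, by rw [← hl']; exact hchl'⟩
        · rw [hrhs, ← hprod']
          simp [genH, List.prod_cons, mul_assoc]
        · simp
end FreePart

/-- The candidate free subgroup embedding. -/
noncomputable def iota (a b c : A) : FreeGroup (Fin 2) →* (↥(Xpro A) ≃ₜ ↥(Xpro A)) :=
  FreeGroup.lift (genH a b c)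

lemma iota_mem (a b c : A) (u : FreeGroup (Fin 2)) :
    iota a b c u ∈ fullGroupZ (shiftPro A) := by
  induction u using FreeGroup.induction_on with
  | C1 => rw [map_one]; exact one_mem _
  | of x =>
    have : iota a b c (FreeGroup.of x) = genH a b c x := FreeGroup.lift_apply_of
    rw [this]
    exact mul_mem (sigma_mem a) (sigma_mem _)
  | inv_of x ih => rw [map_inv]; exact inv_mem ih
  | mul u v hu hv => rw [map_mul]; exact mul_mem hu hv

lemma iota_injective (hq : 3 ≤ Fintype.card A) {a b c : A}
    (hab : a ≠ b) (hac : a ≠ c) (hbc : b ≠ c) :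
    Function.Injective (iota a b c : FreeGroup (Fin 2) →* _) := by
  rw [injective_iff_map_eq_one]
  intro g hg
  by_contra hg1
  have hneL : g.toWord ≠ [] := fun hh => hg1 (FreeGroup.toWord_eq_nil_iff.mp hh)
  have hchainL : List.Chain' (fun p q => ¬(q.1 = p.1 ∧ q.2 = !p.2)) g.toWord := by
    apply reduced_chain
    intro L₁ L₂ x bb hh
    exact FreeGroup.reduce.not (L₁ := g.toWord) (by rw [FreeGroup.reduce_toWord]; exact hh)
  have hval : iota a b c g =
      ((g.toWord.map fun p => cond p.2 (genH a b c p.1) (genH a b c p.1)⁻¹)).prod := by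
    conv_lhs => rw [← FreeGroup.mk_toWord (x := g)]
    exact FreeGroup.lift_mk
  rcases hL : g.toWord with _ | ⟨x, L'⟩
  · exact hneL hL
  · rw [hL] at hchainL hval
    obtain ⟨l, hch, hprod, rest, hpat⟩ := blockProd hab hac hbc L' x hchainL
    have hlne : l ≠ [] := by
      rw [hpat]
      cases hx2 : x.2 <;> simp [hx2]
    have := key_lemma hq l hlne hch
    rw [hprod, ← hval, hg] at this
    exact this rfl

end VanDouwen

open VanDouwen

/-- van Douwen: for an alphabet with `q ≥ 3` letters, the topological
full group of the proper subshift contains involutions `σ_i` (with the explicit cocycle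
`κ_i`) generating a free product of `q` copies of `ℤ/2ℤ`; in particular it contains a
nonabelian free subgroup. -/
theorem statement16 (A : Type*) [Fintype A] [DecidableEq A] [TopologicalSpace A]
    [DiscreteTopology A] (hq : 3 ≤ Fintype.card A) :
    ∃ σ : A → (↥(Xpro A) ≃ₜ ↥(Xpro A)),
      (∀ i, σ i ∈ fullGroupZ (shiftPro A)) ∧
      (∀ (i : A) (w : ↥(Xpro A)) (n : ℤ),
        ((σ i w : ℤ → A) n) =
          if (w : ℤ → A) 0 = i then (w : ℤ → A) (n - 1)
          else if (w : ℤ → A) 1 = i then (w : ℤ → A) (n + 1)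
          else (w : ℤ → A) n) ∧
      (∀ i, σ i * σ i = 1) ∧
      (∃ Φ : Monoid.CoprodI (fun _ : A => Multiplicative (ZMod 2)) →*
          (↥(Xpro A) ≃ₜ ↥(Xpro A)),
        Function.Injective Φ ∧
        ∀ i : A, Φ (Monoid.CoprodI.of (i := i) (Multiplicative.ofAdd 1)) = σ i) ∧
      (∃ ι : FreeGroup (Fin 2) →* (↥(Xpro A) ≃ₜ ↥(Xpro A)),
        Function.Injective ι ∧ ∀ u, ι u ∈ fullGroupZ (shiftPro A)) := by
  have hA : Nonempty A := Fintype.card_pos_iff.mp (by omega)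
  obtain ⟨a⟩ := hA
  obtain ⟨b, hb1, -⟩ := exists_ne_ne hq a a
  obtain ⟨c, hc1, hc2⟩ := exists_ne_ne hq a b
  refine ⟨sigma, sigma_mem, ?_, sigma_sq, ⟨Phi, Phi_injective hq, Phi_of⟩,
    ⟨iota a b c, iota_injective hq (Ne.symm hb1) (Ne.symm hc1) (Ne.symm hc2), iota_mem a b c⟩⟩
  intro i w n
  rw [sigma_apply, sigmaFun_apply]
end

section
/- Define, for n ≥ 1 and j ∈ ℤ, angles θ_{nj} = (π/4)·min(√(|j|/n), 1), and unit vectors h_{nj} = √2·(cos θ_{nj}, sin θ_{nj}) in ℝ² viewed as L²({0,1}) with uniform measure. For any permutation g of ℤ with c = sup_j ||g(j)| − |j|| < ∞, the product ∏_{j∈ℤ} cos(θ_{nj} − θ_{n,g(j)}) tends to 1 as n → ∞. -/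
open Real Filter Topology

private lemma aux_weier (s : Finset ℤ) (f : ℤ → ℝ) (h0 : ∀ i ∈ s, 0 ≤ f i)
    (h1 : ∀ i ∈ s, f i ≤ 1) :
    1 - ∑ i ∈ s, f i ≤ ∏ i ∈ s, (1 - f i) := by
  induction s using Finset.cons_induction with
  | empty => simp
  | cons a s ha ih =>
    rw [Finset.prod_cons, Finset.sum_cons]
    have hS : 0 ≤ ∑ i ∈ s, f i := Finset.sum_nonneg fun i hi => h0 i (Finset.mem_cons_of_mem hi)
    have hP : 0 ≤ ∏ i ∈ s, (1 - f i) :=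
      Finset.prod_nonneg fun i hi => by linarith [h1 i (Finset.mem_cons_of_mem hi)]
    have IH := ih (fun i hi => h0 i (Finset.mem_cons_of_mem hi))
      (fun i hi => h1 i (Finset.mem_cons_of_mem hi))
    have ha0 := h0 a (Finset.mem_cons_self a s)
    have ha1 := h1 a (Finset.mem_cons_self a s)
    nlinarith

private lemma aux_min_lip (a b : ℝ) : |min a 1 - min b 1| ≤ |a - b| := by
  have h3 : a - b ≤ |a - b| := le_abs_self _
  have h4 : b - a ≤ |a - b| := by rw [abs_sub_comm]; exact le_abs_self _
  have h5 : (0:ℝ) ≤ |a - b| := abs_nonneg _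
  rcases le_total a 1 with h1 | h1 <;> rcases le_total b 1 with h2 | h2 <;>
    simp only [min_eq_left, min_eq_right, h1, h2] <;>
    rw [abs_sub_le_iff] <;> constructor <;> linarith

private lemma aux_sqrt {a b C : ℝ} (hb : 0 ≤ b) (hC : 1 ≤ C) (hab : |a - b| ≤ C)
    (haint : a = 0 ∨ 1 ≤ a) :
    |Real.sqrt a - Real.sqrt b| * Real.sqrt (max 1 a) ≤ C := by
  rcases haint with h | h
  · subst h
    rw [Real.sqrt_zero, zero_sub, abs_neg, abs_of_nonneg (Real.sqrt_nonneg b),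
      max_eq_left (by norm_num), Real.sqrt_one, mul_one]
    have hbC : b ≤ C := by rw [abs_sub_comm, abs_of_nonneg (by linarith)] at hab; linarith
    calc Real.sqrt b ≤ Real.sqrt C := Real.sqrt_le_sqrt hbC
    _ ≤ C := by
        nlinarith [Real.sq_sqrt (by linarith : (0:ℝ) ≤ C), Real.sqrt_nonneg C]
  · have ha : (0:ℝ) ≤ a := by linarith
    rw [max_eq_right h]
    have key : |Real.sqrt a - Real.sqrt b| * (Real.sqrt a + Real.sqrt b) = |a - b| := by
      rw [← abs_of_nonneg (by positivity : (0:ℝ) ≤ Real.sqrt a + Real.sqrt b), ← abs_mul]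
      congr 1
      nlinarith [Real.sq_sqrt ha, Real.sq_sqrt hb]
    nlinarith [Real.sqrt_nonneg b, abs_nonneg (Real.sqrt a - Real.sqrt b)]

private lemma aux_sum_inv' (M : ℕ) :
    ∑ j ∈ Finset.Icc (0:ℤ) M, 1 / (max 1 |(j:ℝ)|) ≤ 2 + Real.log M := by
  have hins : Finset.Icc (0:ℤ) M = insert 0 (Finset.Icc (1:ℤ) M) := by
    ext j; simp; omega
  rw [hins, Finset.sum_insert (by simp)]
  have h0 : 1 / (max 1 |((0:ℤ):ℝ)|) = 1 := by norm_num
  rw [h0]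
  have hmap : ∑ j ∈ Finset.Icc (1:ℤ) M, 1 / (max 1 |(j:ℝ)|)
      = ∑ k ∈ Finset.Icc 1 M, ((k:ℝ))⁻¹ := by
    refine Finset.sum_nbij' (fun j => j.toNat) (fun k => (k:ℤ)) ?_ ?_ ?_ ?_ ?_
    · intro j hj; simp at hj ⊢; omega
    · intro k hk; simp at hk ⊢; omega
    · intro j hj; simp at hj ⊢; omega
    · intro k hk; simp
    · intro j hj
      simp only [Finset.mem_Icc] at hj
      have h1 : (1:ℝ) ≤ (j:ℝ) := by exact_mod_cast hj.1
      rw [abs_of_nonneg (by linarith), max_eq_right h1, one_div]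
      congr 1
      have hjt : (j.toNat : ℤ) = j := Int.toNat_of_nonneg (by omega)
      exact_mod_cast hjt.symm
  rw [hmap]
  have := harmonic_le_one_add_log M
  rw [harmonic_eq_sum_Icc] at this
  have hcast : ((∑ d ∈ Finset.Icc 1 M, (d:ℚ)⁻¹ : ℚ) : ℝ) = ∑ k ∈ Finset.Icc 1 M, ((k:ℝ))⁻¹ := by
    push_cast; ring
  rw [hcast] at this
  linarith

private lemma aux_sum_inv (M : ℕ) :
    ∑ j ∈ Finset.Icc (-(M:ℤ)) M, 1 / (max 1 |(j:ℝ)|) ≤ 4 + 2 * Real.log M := by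
  have hF0 : ∀ j : ℤ, 0 ≤ 1 / (max 1 |(j:ℝ)|) := fun j => by positivity
  have hunion : Finset.Icc (-(M:ℤ)) 0 ∪ Finset.Icc (0:ℤ) M = Finset.Icc (-(M:ℤ)) M := by
    ext j; simp; omega
  have hsplit : ∑ j ∈ Finset.Icc (-(M:ℤ)) M, 1 / (max 1 |(j:ℝ)|) ≤
      (∑ j ∈ Finset.Icc (-(M:ℤ)) 0, 1 / (max 1 |(j:ℝ)|)) +
      ∑ j ∈ Finset.Icc (0:ℤ) M, 1 / (max 1 |(j:ℝ)|) := by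
    rw [← hunion]
    refine le_trans ?_ (le_of_eq (Finset.sum_union_inter (f := fun j : ℤ => 1 / (max 1 |(j:ℝ)|))))
    simp only [le_add_iff_nonneg_right]
    exact Finset.sum_nonneg fun i _ => hF0 i
  have hneg : ∑ j ∈ Finset.Icc (-(M:ℤ)) 0, 1 / (max 1 |(j:ℝ)|) =
      ∑ j ∈ Finset.Icc (0:ℤ) M, 1 / (max 1 |(j:ℝ)|) := by
    refine Finset.sum_nbij' (fun j => -j) (fun j => -j) ?_ ?_ ?_ ?_ ?_ <;>
      intros <;> simp_all <;> omega
  have := aux_sum_inv' M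
  linarith

private lemma aux_lim (K A B : ℝ) (hK : 0 ≤ K) :
    Tendsto (fun n : ℕ => A / n + B * (Real.log (n + K) / n)) atTop (𝓝 0) := by
  have h1 : Tendsto (fun n : ℕ => A / n) atTop (𝓝 0) := tendsto_const_div_atTop_nhds_zero_nat A
  have h2 : Tendsto (fun n : ℕ => Real.log (n + K) / n) atTop (𝓝 0) := by
    have hcomp : Tendsto (fun n : ℕ => ((n:ℝ) + K)) atTop atTop :=
      tendsto_atTop_add_const_right atTop K tendsto_natCast_atTop_atTop
    have hlog : Tendsto (fun x : ℝ => Real.log x / x) atTop (𝓝 0) :=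
      Real.isLittleO_log_id_atTop.tendsto_div_nhds_zero
    have hA : Tendsto (fun n : ℕ => Real.log ((n:ℝ) + K) / ((n:ℝ) + K)) atTop (𝓝 0) :=
      hlog.comp hcomp
    have hB : Tendsto (fun n : ℕ => ((n:ℝ) + K) / n) atTop (𝓝 1) := by
      have : Tendsto (fun n : ℕ => 1 + K / n) atTop (𝓝 (1 + 0)) :=
        (tendsto_const_nhds).add (tendsto_const_div_atTop_nhds_zero_nat K)
      rw [add_zero] at this
      refine this.congr' ?_
      filter_upwards [eventually_ge_atTop 1] with n hn
      have hn0 : (n:ℝ) ≠ 0 := by positivity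
      field_simp
    have := hA.mul hB
    rw [zero_mul] at this
    refine this.congr' ?_
    filter_upwards [eventually_ge_atTop 1] with n hn
    have hn0 : (n:ℝ) ≠ 0 := by positivity
    have hnK : (n:ℝ) + K ≠ 0 := by positivity
    field_simp
  have := h1.add ((tendsto_const_nhds (x := B)).mul h2)
  simpa using this

noncomputable def th (n : ℕ) (j : ℤ) : ℝ :=
  π / 4 * min (Real.sqrt (((|j| : ℤ) : ℝ) / n)) 1

lemma th_mem (n : ℕ) (j : ℤ) : 0 ≤ th n j ∧ th n j ≤ π / 4 := by
  have h1 : 0 ≤ min (Real.sqrt (((|j| : ℤ) : ℝ) / n)) 1 :=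
    le_min (Real.sqrt_nonneg _) zero_le_one
  have h2 : min (Real.sqrt (((|j| : ℤ) : ℝ) / n)) 1 ≤ 1 := min_le_right _ _
  have hπ : 0 < π / 4 := by positivity
  constructor
  · exact mul_nonneg hπ.le h1
  · calc th n j ≤ π / 4 * 1 := by exact mul_le_mul_of_nonneg_left h2 hπ.le
    _ = π / 4 := mul_one _

lemma th_top {n : ℕ} (hn : 1 ≤ n) {j : ℤ} (hj : (n : ℤ) ≤ |j|) : th n j = π / 4 := by
  have hn0 : (0:ℝ) < n := by exact_mod_cast hn
  have h1 : (1:ℝ) ≤ ((|j| : ℤ) : ℝ) / n := by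
    rw [le_div_iff₀ hn0, one_mul]
    exact_mod_cast hj
  have : (1:ℝ) ≤ Real.sqrt (((|j| : ℤ) : ℝ) / n) := Real.one_le_sqrt.mpr h1
  rw [th, min_eq_right this, mul_one]

lemma th_diff_abs (n : ℕ) (j k : ℤ) : |th n j - th n k| ≤ π / 4 := by
  obtain ⟨h1, h2⟩ := th_mem n j
  obtain ⟨h3, h4⟩ := th_mem n k
  rw [abs_sub_le_iff]; constructor <;> linarith

lemma th_sq_bound {n : ℕ} (hn : 1 ≤ n) {C : ℝ} (hC : 1 ≤ C) {j k : ℤ}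
    (habs : |((|j| : ℤ) : ℝ) - ((|k| : ℤ) : ℝ)| ≤ C) :
    (th n j - th n k) ^ 2 ≤ π ^ 2 / 16 * (C ^ 2 / ((n : ℝ) * max 1 ((|j| : ℤ) : ℝ))) := by
  set a : ℝ := ((|j| : ℤ) : ℝ) with hadef
  set b : ℝ := ((|k| : ℤ) : ℝ) with hbdef
  have ha : 0 ≤ a := by positivity
  have hb : 0 ≤ b := by positivity
  have haint : a = 0 ∨ 1 ≤ a := by
    rcases eq_or_ne j 0 with h | h
    · left; simp [hadef, h]
    · right
      have h2 : (1:ℤ) ≤ |j| := Int.one_le_abs (by exact_mod_cast h)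
      rw [hadef]; exact_mod_cast h2
  have hπ : (0:ℝ) < π / 4 := by positivity
  have hn0 : (0:ℝ) < n := by exact_mod_cast hn
  have hm1 : (0:ℝ) < Real.sqrt (max 1 a) := Real.sqrt_pos.mpr (by positivity)
  have hsq : |Real.sqrt a - Real.sqrt b| ≤ C / Real.sqrt (max 1 a) := by
    rw [le_div_iff₀ hm1]
    exact aux_sqrt hb hC habs haint
  have hbound : |th n j - th n k| ≤ π / 4 * (C / (Real.sqrt (max 1 a) * Real.sqrt n)) := by
    have e0 : th n j - th n k =
        π / 4 * (min (Real.sqrt (a / n)) 1 - min (Real.sqrt (b / n)) 1) := by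
      rw [th, th]; ring
    rw [e0, abs_mul, abs_of_nonneg hπ.le]
    have e1 : |min (Real.sqrt (a / n)) 1 - min (Real.sqrt (b / n)) 1| ≤
        |Real.sqrt (a / n) - Real.sqrt (b / n)| := aux_min_lip _ _
    have e2 : |Real.sqrt (a / n) - Real.sqrt (b / n)| =
        |Real.sqrt a - Real.sqrt b| / Real.sqrt n := by
      rw [Real.sqrt_div ha, Real.sqrt_div hb, div_sub_div_same, abs_div,
        abs_of_nonneg (Real.sqrt_nonneg _)]
    have hsn : (0:ℝ) < Real.sqrt n := Real.sqrt_pos.mpr hn0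
    have e3 : |Real.sqrt a - Real.sqrt b| / Real.sqrt n ≤
        C / (Real.sqrt (max 1 a) * Real.sqrt n) := by
      rw [div_le_div_iff₀ hsn (by positivity)]
      calc |Real.sqrt a - Real.sqrt b| * (Real.sqrt (max 1 a) * Real.sqrt n)
          = (|Real.sqrt a - Real.sqrt b| * Real.sqrt (max 1 a)) * Real.sqrt n := by ring
        _ ≤ C * Real.sqrt n := by
            exact mul_le_mul_of_nonneg_right (aux_sqrt hb hC habs haint) hsn.le
    gcongr
    exact le_trans e1 (le_of_eq e2) |>.trans e3
  have e1 : Real.sqrt (max 1 a) ^ 2 = max 1 a := Real.sq_sqrt (by positivity)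
  have e2 : Real.sqrt (n:ℝ) ^ 2 = (n:ℝ) := Real.sq_sqrt hn0.le
  calc (th n j - th n k) ^ 2 = |th n j - th n k| ^ 2 := (sq_abs _).symm
    _ ≤ (π / 4 * (C / (Real.sqrt (max 1 a) * Real.sqrt n))) ^ 2 := by
        apply pow_le_pow_left₀ (abs_nonneg _) hbound
    _ = π ^ 2 / 16 * (C ^ 2 / ((n : ℝ) * max 1 a)) := by
        rw [mul_pow, div_pow, div_pow, mul_pow, e1, e2]; ring

/-- Juschenko–Monod computation: with
`θ_{nj} = (π/4)·min(√(|j|/n), 1)`, for any permutation `g` of `ℤ` with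
`sup_j ||g j| − |j|| < ∞`, the product `∏_j cos(θ_{nj} − θ_{n,g(j)})` tends to `1`. -/
theorem statement19 (g : Equiv.Perm ℤ)
    (hg : ∃ c : ℤ, ∀ j : ℤ, abs (|g j| - |j|) ≤ c) :
    Tendsto (fun n : ℕ => ∏' j : ℤ,
        Real.cos (π / 4 * min (Real.sqrt (((|j| : ℤ) : ℝ) / n)) 1 -
          π / 4 * min (Real.sqrt (((|g j| : ℤ) : ℝ) / n)) 1))
      atTop (nhds 1) := by
  obtain ⟨c, hc⟩ := hg
  show Tendsto (fun n : ℕ => ∏' j : ℤ, Real.cos (th n j - th n (g j))) atTop (𝓝 1)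
  set c0 : ℤ := max c 1 with hc0def
  have hc01 : (1:ℤ) ≤ c0 := le_max_right _ _
  have hc' : ∀ j : ℤ, |(|g j| - |j|)| ≤ c0 := fun j => (hc j).trans (le_max_left _ _)
  set K : ℕ := c0.toNat with hKdef
  have hKc : (K:ℤ) = c0 := Int.toNat_of_nonneg (by omega)
  set C : ℝ := (c0 : ℝ) with hCdef
  have hC1 : (1:ℝ) ≤ C := by rw [hCdef]; exact_mod_cast hc01
  have habsC : ∀ j : ℤ, |((|j| : ℤ) : ℝ) - ((|g j| : ℤ) : ℝ)| ≤ C := by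
    intro j
    have h := hc' j
    rw [abs_sub_comm]
    rw [hCdef]
    push_cast
    exact_mod_cast h
  set s : ℕ → Finset ℤ := fun n => Finset.Icc (-((n + K : ℕ) : ℤ)) ((n + K : ℕ) : ℤ) with hsdef
  -- vanishing off s n
  have hvan : ∀ n : ℕ, 1 ≤ n → ∀ j ∉ s n, Real.cos (th n j - th n (g j)) = 1 := by
    intro n hn j hj
    rw [hsdef] at hj
    simp only [Finset.mem_Icc, not_and_or, not_le] at hj
    have hjbig : ((n + K : ℕ) : ℤ) < |j| := by
      rcases abs_cases j with ⟨h1, h2⟩ | ⟨h1, h2⟩ <;> rcases hj with h | h <;> omega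
    have h1 : (n:ℤ) ≤ |j| := by push_cast at hjbig; omega
    have h2 : (n:ℤ) ≤ |g j| := by
      have h3 := abs_le.mp (hc' j)
      push_cast at hjbig
      omega
    rw [th_top hn h1, th_top hn h2, sub_self, Real.cos_zero]
  -- the dominating sequence
  set U : ℕ → ℝ := fun n =>
    (π^2 * C^2 / 8) / n + (π^2 * C^2 / 16) * (Real.log ((n:ℝ) + (K:ℝ)) / n) with hUdef
  have hU0 : Tendsto U atTop (𝓝 0) := aux_lim (K:ℝ) _ _ (by positivity)
  have hL : Tendsto (fun n : ℕ => 1 - U n) atTop (𝓝 1) := by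
    have h := (tendsto_const_nhds (x := (1:ℝ)) (f := atTop (α := ℕ))).sub hU0
    simpa using h
  have hπ4 : π / 4 ≤ π / 2 := by linarith [pi_pos]
  have hcos0 : ∀ n : ℕ, ∀ j : ℤ, 0 ≤ Real.cos (th n j - th n (g j)) := by
    intro n j
    have h := abs_le.mp (th_diff_abs n j (g j))
    apply Real.cos_nonneg_of_mem_Icc
    constructor <;> [linarith [h.1]; linarith [h.2]]
  -- key bounds for n ≥ 1
  have hkey : ∀ n : ℕ, 1 ≤ n →
      1 - U n ≤ (∏' j : ℤ, Real.cos (th n j - th n (g j))) ∧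
        (∏' j : ℤ, Real.cos (th n j - th n (g j))) ≤ 1 := by
    intro n hn
    have hn0 : (0:ℝ) < n := by exact_mod_cast hn
    have htp : (∏' j : ℤ, Real.cos (th n j - th n (g j))) =
        ∏ j ∈ s n, Real.cos (th n j - th n (g j)) := tprod_eq_prod (hvan n hn)
    have hf01 : ∀ j : ℤ, 0 ≤ (th n j - th n (g j))^2/2 ∧ (th n j - th n (g j))^2/2 ≤ 1 := by
      intro j
      refine ⟨by positivity, ?_⟩
      have h := abs_le.mp (th_diff_abs n j (g j))
      nlinarith [Real.pi_le_four]
    constructor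
    · rw [htp]
      -- sum bound
      have hsum : ∑ j ∈ s n, (th n j - th n (g j))^2/2 ≤ U n := by
        have h1 : ∀ j ∈ s n, (th n j - th n (g j))^2/2 ≤
            (π^2/32 * C^2 / n) * (1 / max 1 |(j:ℝ)|) := by
          intro j _
          have hb := th_sq_bound hn hC1 (k := g j) (habsC j)
          have hm : (0:ℝ) < max 1 |(j:ℝ)| := by positivity
          have hcast : ((|j| : ℤ) : ℝ) = |(j:ℝ)| := by push_cast; ring
          rw [hcast] at hb
          calc (th n j - th n (g j))^2/2
              ≤ (π ^ 2 / 16 * (C ^ 2 / ((n : ℝ) * max 1 |(j:ℝ)|)))/2 := by linarith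
            _ = (π^2/32 * C^2 / n) * (1 / max 1 |(j:ℝ)|) := by field_simp; ring
        calc ∑ j ∈ s n, (th n j - th n (g j))^2/2
            ≤ ∑ j ∈ s n, (π^2/32 * C^2 / n) * (1 / max 1 |(j:ℝ)|) := Finset.sum_le_sum h1
          _ = (π^2/32 * C^2 / n) * ∑ j ∈ s n, 1 / max 1 |(j:ℝ)| := by
              rw [Finset.mul_sum]
          _ ≤ (π^2/32 * C^2 / n) * (4 + 2 * Real.log (n + K : ℕ)) := by
              have hpos : (0:ℝ) ≤ π^2/32 * C^2 / n := by positivity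
              exact mul_le_mul_of_nonneg_left (aux_sum_inv (n + K)) hpos
          _ = U n := by
              rw [hUdef]
              have hcast : ((n + K : ℕ) : ℝ) = (n:ℝ) + (K:ℝ) := by push_cast; ring
              rw [hcast]
              field_simp
              ring
      have hw : 1 - ∑ j ∈ s n, (th n j - th n (g j))^2/2 ≤
          ∏ j ∈ s n, (1 - (th n j - th n (g j))^2/2) :=
        aux_weier _ _ (fun j _ => (hf01 j).1) (fun j _ => (hf01 j).2)
      have hprod : ∏ j ∈ s n, (1 - (th n j - th n (g j))^2/2) ≤
          ∏ j ∈ s n, Real.cos (th n j - th n (g j)) := by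
        refine Finset.prod_le_prod (fun j _ => by linarith [(hf01 j).2]) (fun j _ => ?_)
        exact Real.one_sub_sq_div_two_le_cos
      calc 1 - U n ≤ 1 - ∑ j ∈ s n, (th n j - th n (g j))^2/2 := by linarith
        _ ≤ ∏ j ∈ s n, (1 - (th n j - th n (g j))^2/2) := hw
        _ ≤ ∏ j ∈ s n, Real.cos (th n j - th n (g j)) := hprod
    · rw [htp]
      exact Finset.prod_le_one (fun j _ => hcos0 n j) (fun j _ => Real.cos_le_one _)
  refine tendsto_of_tendsto_of_tendsto_of_le_of_le' hL tendsto_const_nhds ?_ ?_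
  · filter_upwards [eventually_ge_atTop 1] with n hn
    exact (hkey n hn).1
  · filter_upwards [eventually_ge_atTop 1] with n hn
    exact (hkey n hn).2
end
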